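/- arXiv:2409.14788 — 7 statements merged into one kernel-verified Lean document; each statement's English description precedes it below -/
import Mathlib

section
/- Let a be an integer with a ≥ 2. Then the series ∑_{n=2}^∞ 1/(a·n·(n−2)+1) converges and equals 1/(2(a−1)) − (π/(2√(a²−a)))·cot(√(a²−a)·π/a). -/
open Real

noncomputable section CotAux

/-- integral of `exp (I c x)` over `[-π, π]`. -/
lemma exp_integral_pi (c : ℝ) (hc : c ≠ 0) :
    ∫ x in (-π)..π, Complex.exp ((Complex.I * (c : ℂ)) * (x : ℝ)) =
      2 * (Real.sin (c * π) : ℂ) / (c : ℂ) := by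
  have hc' : (c : ℂ) ≠ 0 := Complex.ofReal_ne_zero.mpr hc
  rw [integral_exp_mul_complex (mul_ne_zero Complex.I_ne_zero hc')]
  rw [Complex.ofReal_sin, Complex.sin]
  have h1 : (Complex.I * (c:ℂ)) * ((π:ℝ):ℂ) = ((c * π : ℝ) : ℂ) * Complex.I := by
    push_cast; ring
  have h2 : (Complex.I * (c:ℂ)) * ((-π : ℝ):ℂ) = -(((c * π : ℝ) : ℂ) * Complex.I) := by
    push_cast; ring
  rw [h1, h2, Complex.exp_neg]
  have hexp : Complex.exp (((c * π : ℝ) : ℂ) * Complex.I) ≠ 0 := Complex.exp_ne_zero _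
  field_simp
  ring_nf
  simp only [Complex.I_sq]
  have hE : Complex.exp ((c:ℂ) * (π:ℂ) * Complex.I) *
      Complex.exp (-((c:ℂ) * (π:ℂ) * Complex.I)) = 1 := by
    rw [← Complex.exp_add]; simp
  linear_combination (by rw [← Complex.exp_add]; simp : Complex.exp (((c * π : ℝ) : ℂ) * Complex.I) *
      Complex.exp (-(((c * π : ℝ) : ℂ) * Complex.I)) = 1)

end CotAux

section Cot

lemma int_ne_aux {r : ℝ} (hr0 : 0 < r) (hr1 : r < 1) (m : ℤ) : r - (m : ℝ) ≠ 0 := by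
  intro h
  have hm : (m : ℝ) = r := by linarith
  have h1 : (0 : ℤ) < m := by exact_mod_cast hm ▸ hr0
  have h2 : m < 1 := by exact_mod_cast hm ▸ hr1
  omega

lemma sq_ne_aux {r : ℝ} (hr0 : 0 < r) (hr1 : r < 1) (m : ℤ) : r ^ 2 - (m : ℝ) ^ 2 ≠ 0 := by
  have h1 := int_ne_aux hr0 hr1 m
  have h2 := int_ne_aux hr0 hr1 (-m)
  push_cast at h2
  intro h
  have : (r - m) * (r + m) = 0 := by ring_nf; ring_nf at h; linarith
  rcases mul_eq_zero.mp this with h' | h'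
  · exact h1 h'
  · exact h2 (by linarith)

theorem hasSum_cot_aux {r : ℝ} (hr0 : 0 < r) (hr1 : r < 1) :
    HasSum (fun n : ℤ => Real.sin (r * π) * r / π / (r ^ 2 - (n : ℝ) ^ 2))
      (Real.cos (r * π)) := by
  haveI : Fact (0 < 2 * π) := ⟨by positivity⟩
  set g : ℝ → ℂ := fun x => ((Real.cos (r * Real.arccos (Real.cos x)) : ℝ) : ℂ) with hg
  have hper : Function.Periodic g (2 * π) := by
    intro x
    simp only [hg, Real.cos_add_two_pi]
  have hcont : Continuous g := by
    exact Complex.continuous_ofReal.comp (Real.continuous_cos.comp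
      (continuous_const.mul (Real.continuous_arccos.comp Real.continuous_cos)))
  set F : C(AddCircle (2 * π), ℂ) := ⟨hper.lift, hcont.quotient_liftOn' _⟩ with hF
  have hFx : ∀ x : ℝ, x ∈ Set.Icc (-π) π →
      F (x : AddCircle (2 * π)) = ((Real.cos (r * x) : ℝ) : ℂ) := by
    intro x hx
    simp only [hF, ContinuousMap.coe_mk]
    show hper.lift (x : AddCircle (2 * π)) = _
    rw [Function.Periodic.lift_coe]
    have harc : Real.arccos (Real.cos x) = |x| := by
      rcases le_or_gt 0 x with h | h
      · rw [abs_of_nonneg h, Real.arccos_cos h hx.2]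
      · rw [abs_of_neg h, ← Real.cos_neg, Real.arccos_cos (by linarith) (by linarith [hx.1])]
    simp only [hg, harc]
    rcases abs_cases x with ⟨h, _⟩ | ⟨h, _⟩ <;> rw [h]
    simp [mul_neg, Real.cos_neg]
  have hπ : (π : ℝ) ≠ 0 := Real.pi_ne_zero
  have hle : -π ≤ π := by linarith [Real.pi_pos]
  have hcosn : ∀ n : ℤ, Real.cos ((n : ℝ) * π) = (-1 : ℝ) ^ n := by
    intro n
    simpa using Real.cos_int_mul_pi_sub 0 n
  have hcoef : ∀ n : ℤ, fourierCoeff (⇑F) n =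
      (((Real.sin (r * π) * r / π) * (-1 : ℝ) ^ n / (r ^ 2 - (n : ℝ) ^ 2) : ℝ) : ℂ) := by
    intro n
    rw [fourierCoeff_eq_intervalIntegral (⇑F) n (-π)]
    have hb : -π + 2 * π = π := by ring
    rw [hb]
    have int1 : IntervalIntegrable
        (fun x : ℝ => Complex.exp ((Complex.I * ((r - (n : ℝ) : ℝ) : ℂ)) * (x : ℝ)))
        MeasureTheory.volume (-π) π :=
      (Complex.continuous_exp.comp (continuous_const.mul Complex.continuous_ofReal)).intervalIntegrable _ _
    have int2 : IntervalIntegrable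
        (fun x : ℝ => Complex.exp ((Complex.I * ((-(r + (n : ℝ)) : ℝ) : ℂ)) * (x : ℝ)))
        MeasureTheory.volume (-π) π :=
      (Complex.continuous_exp.comp (continuous_const.mul Complex.continuous_ofReal)).intervalIntegrable _ _
    have hint : (∫ x in (-π)..π, fourier (-n) ((x : ℝ) : AddCircle (2 * π)) • F ((x : ℝ) : AddCircle (2 * π)))
        = (1 / 2 : ℂ) * ((∫ x in (-π)..π, Complex.exp ((Complex.I * ((r - (n : ℝ) : ℝ) : ℂ)) * (x : ℝ)))
          + (∫ x in (-π)..π, Complex.exp ((Complex.I * ((-(r + (n : ℝ)) : ℝ) : ℂ)) * (x : ℝ)))) := by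
      rw [← intervalIntegral.integral_add int1 int2, ← intervalIntegral.integral_const_mul]
      apply intervalIntegral.integral_congr
      intro x hx
      rw [Set.uIcc_of_le hle] at hx
      dsimp only
      rw [smul_eq_mul, hFx x hx, fourier_coe_apply, Complex.ofReal_cos, Complex.cos]
      have e1 : Complex.exp (2 * (π : ℂ) * Complex.I * ((-n : ℤ) : ℂ) * (x : ℂ) / ((2 * π : ℝ) : ℂ))
          = Complex.exp (-((n : ℂ) * (x : ℂ) * Complex.I)) := by
        congr 1
        have hπc : (π : ℂ) ≠ 0 := Complex.ofReal_ne_zero.mpr Real.pi_ne_zero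
        push_cast
        field_simp
      rw [e1]
      have mul1 : Complex.exp (-((n : ℂ) * (x : ℂ) * Complex.I)) *
          Complex.exp (((r * x : ℝ) : ℂ) * Complex.I)
          = Complex.exp ((Complex.I * ((r - (n : ℝ) : ℝ) : ℂ)) * (x : ℝ)) := by
        rw [← Complex.exp_add]; congr 1; push_cast; ring
      have mul2 : Complex.exp (-((n : ℂ) * (x : ℂ) * Complex.I)) *
          Complex.exp ((-((r * x : ℝ) : ℂ)) * Complex.I)
          = Complex.exp ((Complex.I * ((-(r + (n : ℝ)) : ℝ) : ℂ)) * (x : ℝ)) := by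
        rw [← Complex.exp_add]; congr 1; push_cast; ring
      linear_combination (1 / 2 : ℂ) * mul1 + (1 / 2 : ℂ) * mul2
    rw [hint, exp_integral_pi (r - (n : ℝ)) (int_ne_aux hr0 hr1 n),
      exp_integral_pi (-(r + (n : ℝ))) ?hne2]
    case hne2 =>
      have h' := int_ne_aux hr0 hr1 (-n)
      rw [Int.cast_neg, sub_neg_eq_add] at h'
      intro h; apply h'; linarith
    have hs1 : Real.sin ((r - (n : ℝ)) * π) = (-1 : ℝ) ^ n * Real.sin (r * π) := by
      rw [sub_mul, Real.sin_sub, Real.sin_int_mul_pi, hcosn]; ring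
    have hs2 : Real.sin (-(r + (n : ℝ)) * π) = -((-1 : ℝ) ^ n * Real.sin (r * π)) := by
      rw [neg_mul, Real.sin_neg, add_mul, Real.sin_add, Real.sin_int_mul_pi, hcosn]; ring
    rw [hs1, hs2]
    have e2 : 2 * (((-((-1:ℝ)^n * Real.sin (r*π))) : ℝ) : ℂ) / ((-(r + (n:ℝ)) : ℝ) : ℂ)
        = 2 * ((((-1:ℝ)^n * Real.sin (r*π)) : ℝ) : ℂ) / (((r + (n:ℝ)) : ℝ) : ℂ) := by
      push_cast
      rw [mul_neg, neg_div_neg_eq]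
    rw [e2, Complex.real_smul]
    have hn1 : ((r : ℂ) - (n : ℂ)) ≠ 0 := by
      have h' := int_ne_aux hr0 hr1 n
      intro h; apply h'; exact_mod_cast h
    have hn2 : ((r : ℂ) + (n : ℂ)) ≠ 0 := by
      have h' := int_ne_aux hr0 hr1 (-n)
      rw [Int.cast_neg, sub_neg_eq_add] at h'
      intro h; apply h'; exact_mod_cast h
    have hsq : ((r : ℂ) ^ 2 - (n : ℂ) ^ 2) ≠ 0 := by
      intro h
      exact mul_ne_zero hn1 hn2 (by linear_combination h)
    have hπc : (π : ℂ) ≠ 0 := Complex.ofReal_ne_zero.mpr hπ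
    push_cast
    field_simp
    ring
  have hsumm : Summable (fourierCoeff (⇑F)) := by
    set K := Real.sin (r * π) * r / π with hK
    have hg : Summable (fun n : ℤ => 2 * |K| * (1 / (n : ℝ) ^ 2)) :=
      (Real.summable_one_div_int_pow.mpr one_lt_two).mul_left _
    apply Summable.of_norm_bounded_eventually hg
    refine Filter.eventually_cofinite.mpr (Set.Finite.subset (Set.finite_Icc (-2 : ℤ) 2) ?_)
    intro n hn
    simp only [Set.mem_setOf_eq, not_le] at hn
    by_contra hmem
    apply absurd hn
    simp only [not_lt]
    have hn2 : 2 ≤ |n| := by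
      simp only [Set.mem_Icc] at hmem
      rcases abs_cases n with ⟨h1, _⟩ | ⟨h1, _⟩ <;> omega
    have h4 : (4 : ℝ) ≤ (n : ℝ) ^ 2 := by
      have h2 : (2 : ℝ) ≤ |(n : ℝ)| := by
        rw [← Int.cast_abs]
        exact_mod_cast hn2
      nlinarith [sq_abs (n : ℝ), abs_nonneg (n : ℝ)]
    rw [hcoef n]
    rw [Complex.norm_real]
    have habs1 : |r ^ 2 - (n : ℝ) ^ 2| = (n : ℝ) ^ 2 - r ^ 2 := by
      rw [abs_sub_comm, abs_of_nonneg (by nlinarith)]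
    have hs : |(-1 : ℝ) ^ n| = 1 := by
      rcases Int.even_or_odd n with he | ho
      · rw [he.neg_one_zpow]; norm_num
      · rw [ho.neg_one_zpow]; norm_num
    rw [Real.norm_eq_abs, abs_div, abs_mul, hs, habs1, mul_one]
    have hstep : |K| / ((n : ℝ) ^ 2 - r ^ 2) ≤ |K| / ((n : ℝ) ^ 2 / 2) := by
      apply div_le_div_of_nonneg_left (abs_nonneg K) (by nlinarith) (by nlinarith)
    calc |K| / ((n : ℝ) ^ 2 - r ^ 2) ≤ |K| / ((n : ℝ) ^ 2 / 2) := hstep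
      _ = 2 * |K| * (1 / (n : ℝ) ^ 2) := by
          rw [div_div_eq_mul_div]
          ring
  have H := has_pointwise_sum_fourier_series_of_summable hsumm ((π : ℝ) : AddCircle (2 * π))
  have hFπ : F (((π : ℝ)) : AddCircle (2 * π)) = ((Real.cos (r * π) : ℝ) : ℂ) :=
    hFx π ⟨by linarith [Real.pi_pos], le_refl π⟩
  have hfour : ∀ n : ℤ, fourier n (((π : ℝ)) : AddCircle (2 * π)) = ((-1 : ℂ)) ^ n := by
    intro n
    rw [fourier_coe_apply]
    have harg : (2 * (π : ℂ) * Complex.I * (n : ℂ) * ((π : ℝ) : ℂ) / ((2 * π : ℝ) : ℂ))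
        = (n : ℂ) * ((π : ℂ) * Complex.I) := by
      have hπc : (π : ℂ) ≠ 0 := Complex.ofReal_ne_zero.mpr Real.pi_ne_zero
      push_cast
      field_simp
    rw [harg, Complex.exp_int_mul, Complex.exp_pi_mul_I]
  have heq : (fun n : ℤ => fourierCoeff (⇑F) n • fourier n (((π : ℝ)) : AddCircle (2 * π)))
      = fun n : ℤ => ((Real.sin (r * π) * r / π / (r ^ 2 - (n : ℝ) ^ 2) : ℝ) : ℂ) := by
    funext n
    rw [hcoef n, hfour n, smul_eq_mul]
    have hneg1 : ((-1 : ℂ)) ^ n * ((-1 : ℂ)) ^ n = 1 := by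
      rw [← mul_zpow]
      norm_num
    push_cast
    rw [div_mul_eq_mul_div, mul_assoc, hneg1, mul_one]
  rw [heq, hFπ] at H
  exact Complex.hasSum_ofReal.mp H

end Cot


/-- For an integer `a ≥ 2`, the series `∑_{n=2}^∞ 1/(a·n·(n−2)+1)` converges and equals
`1/(2(a−1)) − (π/(2√(a²−a)))·cot(√(a²−a)·π/a)`. -/
theorem twoStepStar_reciprocal_sum (a : ℤ) (ha : 2 ≤ a) :
    HasSum (fun n : ℕ => 1 / ((a : ℝ) * (n + 2) * n + 1))
      (1 / (2 * ((a : ℝ) - 1)) -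
        π / (2 * Real.sqrt ((a : ℝ) ^ 2 - a)) *
          Real.cot (Real.sqrt ((a : ℝ) ^ 2 - a) * π / a)) := by
  have ha2 : (2 : ℝ) ≤ (a : ℝ) := by exact_mod_cast ha
  have ha0 : (0 : ℝ) < (a : ℝ) := by linarith
  have ha1 : (1 : ℝ) < (a : ℝ) := by linarith
  set s := Real.sqrt ((a : ℝ) ^ 2 - (a : ℝ)) with hs
  have hsa : (0 : ℝ) < (a : ℝ) ^ 2 - (a : ℝ) := by nlinarith
  have hs2 : s ^ 2 = (a : ℝ) ^ 2 - (a : ℝ) := Real.sq_sqrt hsa.le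
  have hs0 : 0 < s := Real.sqrt_pos.mpr hsa
  set r := s / (a : ℝ) with hr
  have hr0 : 0 < r := div_pos hs0 ha0
  have hr2 : r ^ 2 = ((a : ℝ) - 1) / (a : ℝ) := by
    rw [hr, div_pow, hs2]
    field_simp
  have hrlt : r ^ 2 < 1 := by
    rw [hr2, div_lt_one ha0]; linarith
  have hr1 : r < 1 := by nlinarith
  have key := hasSum_cot_aux hr0 hr1
  have hπ := Real.pi_pos
  have hsin : 0 < Real.sin (r * π) :=
    Real.sin_pos_of_pos_of_lt_pi (by positivity) (by nlinarith)
  set K := Real.sin (r * π) * r / π with hK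
  have hKpos : 0 < K := div_pos (mul_pos hsin hr0) hπ
  have step1 := key.nat_add_neg
  simp only [Int.cast_neg, Int.cast_natCast, neg_sq, Int.cast_zero] at step1
  have hfun1 : ∀ n : ℕ, K / (r ^ 2 - (n : ℝ) ^ 2) + K / (r ^ 2 - (n : ℝ) ^ 2)
      = 2 * K / (r ^ 2 - (n : ℝ) ^ 2) := fun n => by
    rw [← add_div, two_mul]
  rw [funext hfun1] at step1
  have h00 : r ^ 2 - (0 : ℝ) ^ 2 = r ^ 2 := by ring
  rw [h00] at step1
  have step2 := (hasSum_nat_add_iff' (f := fun n : ℕ => 2 * K / (r ^ 2 - (n : ℝ) ^ 2)) 1).mpr step1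
  simp only [Finset.range_one, Finset.sum_singleton, Nat.cast_zero] at step2
  rw [h00] at step2
  -- step2 : HasSum (fun n => 2K/(r²-(n+1)²)) (cos(rπ) + K/r² - 2K/r²)
  have hKne : K ≠ 0 := ne_of_gt hKpos
  have hane : (a : ℝ) ≠ 0 := ne_of_gt ha0
  have hterm : (fun n : ℕ => 1 / ((a : ℝ) * (n + 2) * n + 1))
      = fun n : ℕ => (-(1 / (2 * K * (a : ℝ)))) * (2 * K / (r ^ 2 - ((n + 1 : ℕ) : ℝ) ^ 2)) := by
    funext n
    have hDpos : (0 : ℝ) < (a : ℝ) * (n + 2) * n + 1 := by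
      have h1 : (0 : ℝ) ≤ (a : ℝ) * (n + 2) * n := by positivity
      linarith
    have hval : r ^ 2 - ((n + 1 : ℕ) : ℝ) ^ 2 = -(((a : ℝ) * (n + 2) * n + 1)) / (a : ℝ) := by
      rw [hr2]
      push_cast
      field_simp
      ring
    have hDne : (a : ℝ) * (n + 2) * n + 1 ≠ 0 := ne_of_gt hDpos
    have hDne' : (-1 + (-((a : ℝ) * (n : ℝ) * 2) - (a : ℝ) * (n : ℝ) ^ 2)) ≠ 0 := by
      intro h; apply hDne; linear_combination -h
    rw [hval]
    field_simp
  rw [hterm]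
  have final := step2.mul_left (-(1 / (2 * K * (a : ℝ))))
  convert final using 1
  · rfl
  rw [Real.cot_eq_cos_div_sin]
  have hsrπ : s * π / (a : ℝ) = r * π := by rw [hr]; ring
  rw [hsrπ]
  have hsar : s = (a : ℝ) * r := by rw [hr]; field_simp
  rw [hsar, hK, hr2]
  have hsinne : Real.sin (r * π) ≠ 0 := ne_of_gt hsin
  have hπne : π ≠ 0 := ne_of_gt hπ
  have hrne : r ≠ 0 := ne_of_gt hr0
  have ha1ne : (a : ℝ) - 1 ≠ 0 := by linarith
  field_simp
  ring_nf
  rw [mul_inv_cancel_right₀ hsinne]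
end

section
/- Let a and n be integers with a ≥ 8, a ≡ 0 (mod 4), n ≥ 3, and a(n−2) ≥ 4n. Then the Frobenius number of the triple {S_{a,n}, S_{a,n+1}, S_{a,n+2}} equals (2n−2)·S_{a,n+1} + ((a(n−2)+4(n−1))/4)·S_{a,n+2} − S_{a,n}. -/
/-- The 2-step star number `S_{a,n} = a·n·(n−2) + 1`. -/
def twoStepStar (a n : ℕ) : ℕ := a * n * (n - 2) + 1

set_option maxHeartbeats 1000000

/-- Minimality lemma: any nonnegative (x,y) whose `xD+yE` is congruent mod `A`
to the Apéry corner `(2p+4)D + tE` has value `xB+yC` at least the corner value. -/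
lemma tss_key1 (q p s x y : ℤ) (hq : 2 ≤ q) (hp : 0 ≤ p) (hs : 0 ≤ s)
    (hx : 0 ≤ x) (hy : 0 ≤ y)
    (hqs : q * (p + 1) = p + 3 + s)
    (hdvd : (4*q*(p+3)*(p+1)+1) ∣
      (x*(2*p+5) + y*(4*p+12)) - ((2*p+4)*(2*p+5) + (2*p+5+s)*(4*p+12))) :
    (2*p+4)*(4*q*(p+4)*(p+2)+1) + (2*p+5+s)*(4*q*(p+5)*(p+3)+1)
      ≤ x*(4*q*(p+4)*(p+2)+1) + y*(4*q*(p+5)*(p+3)+1) := by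
  obtain ⟨j, hj⟩ := hdvd
  have hA : (4*q*(p+3)*(p+1)+1 : ℤ) = 4*p^2+24*p+37 + s*(4*p+12) := by
    linear_combination (4*(p+3)) * hqs
  have hApos : (0:ℤ) < 4*q*(p+3)*(p+1)+1 := by nlinarith
  have hEpos : (0:ℤ) < 4*p+12 := by linarith
  have hgoal : x*(4*q*(p+4)*(p+2)+1) + y*(4*q*(p+5)*(p+3)+1)
      - ((2*p+4)*(4*q*(p+4)*(p+2)+1) + (2*p+5+s)*(4*q*(p+5)*(p+3)+1))
      = (4*q*(p+3)*(p+1)+1) * (x + y + 4*q*j - (4*p+9+s)) := by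
    linear_combination (4*q) * hj
  suffices h : 0 ≤ x + y + 4*q*j - (4*p+9+s) by
    nlinarith [mul_nonneg hApos.le h]
  -- bound j from below:  j ≥ -2
  have hjlb : -2 ≤ j := by
    have h1 : (4*q*(p+3)*(p+1)+1 : ℤ) * (-3) < (4*q*(p+3)*(p+1)+1) * j := by
      nlinarith [mul_nonneg hx (show (0:ℤ) ≤ 2*p+5 by linarith),
        mul_nonneg hy (show (0:ℤ) ≤ 4*p+12 by linarith),
        mul_nonneg hs (show (0:ℤ) ≤ 4*p+12 by linarith)]
    have := lt_of_mul_lt_mul_left h1 hApos.le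
    omega
  rcases le_or_gt 1 j with h1 | h1
  · -- case j ≥ 1
    have e1 : (4*p+12)*(x+y) ≥ x*(2*p+5)+y*(4*p+12) := by nlinarith
    have e2 : (4*p+12)*(x+y) ≥ (4*p+12)*((2*p+5+s) + (p+3+s)*j) := by
      nlinarith [mul_le_mul_of_nonneg_right h1
        (show (0:ℤ) ≤ (4*p+12)*(p+3+s) by nlinarith), hj, hA]
    have e3 : x+y ≥ (2*p+5+s) + (p+3+s)*j := le_of_mul_le_mul_left e2 hEpos
    have e4 : (p+3+s+4*q) * 1 ≤ (p+3+s+4*q) * j := by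
      apply mul_le_mul_of_nonneg_left h1; nlinarith
    nlinarith
  · -- j ∈ {-2, -1, 0}
    have hjub : j ≤ 0 := by omega
    interval_cases j
    · -- j = -2 : impossible
      exfalso
      have key : x*(2*p+5) + y*(4*p+12) + s*(4*p+12) = 4*p^2+14*p+6 := by
        linear_combination hj - 8*(p+3)*hqs
      have hc : ∃ c : ℤ, x = 2*p+6 + (4*p+12)*c :=
        ⟨-1 + (p+2)*(2*p+4) + (2*p+5)*(2*p+5+s) - 2*(2*p^2+11*p+15+(2*p+5)*s)
          - (p+2)*x - (2*p+5)*y, by linear_combination (2*p+5)*hj - 8*(2*p+5)*(p+3)*hqs⟩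
      obtain ⟨c, hcx⟩ := hc
      have hc0 : 0 ≤ c := by
        by_contra hcn
        push_neg at hcn
        have : c ≤ -1 := by omega
        have := mul_le_mul_of_nonneg_left this (show (0:ℤ) ≤ 4*p+12 by linarith)
        linarith
      nlinarith [mul_nonneg hc0 (show (0:ℤ) ≤ (4*p+12)*(2*p+5) by nlinarith),
        mul_nonneg hy (show (0:ℤ) ≤ 4*p+12 by linarith),
        mul_nonneg hs (show (0:ℤ) ≤ 4*p+12 by linarith)]
    · -- j = -1 : impossible
      exfalso
      have key : x*(2*p+5) + y*(4*p+12) = 8*p^2+38*p+43 := by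
        linear_combination hj - 4*(p+3)*hqs
      have hc : ∃ c : ℤ, x = 4*p+11 + (4*p+12)*c :=
        ⟨-1 + (p+2)*(2*p+4) + (2*p+5)*(2*p+5+s) - (2*p^2+11*p+15+(2*p+5)*s)
          - (p+2)*x - (2*p+5)*y, by linear_combination (2*p+5)*hj - 4*(2*p+5)*(p+3)*hqs⟩
      obtain ⟨c, hcx⟩ := hc
      have hc0 : 0 ≤ c := by
        by_contra hcn
        push_neg at hcn
        have : c ≤ -1 := by omega
        have := mul_le_mul_of_nonneg_left this (show (0:ℤ) ≤ 4*p+12 by linarith)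
        linarith
      nlinarith [mul_nonneg hc0 (show (0:ℤ) ≤ (4*p+12)*(2*p+5) by nlinarith),
        mul_nonneg hy (show (0:ℤ) ≤ 4*p+12 by linarith)]
    · -- j = 0
      have hc : ∃ c : ℤ, x = 2*p+4 + (4*p+12)*c :=
        ⟨(p+2)*(2*p+4) + (2*p+5)*(2*p+5+s) - (p+2)*x - (2*p+5)*y,
          by linear_combination (2*p+5)*hj⟩
      obtain ⟨c, hcx⟩ := hc
      have hc0 : 0 ≤ c := by
        by_contra hcn
        push_neg at hcn
        have : c ≤ -1 := by omega
        have := mul_le_mul_of_nonneg_left this (show (0:ℤ) ≤ 4*p+12 by linarith)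
        linarith
      have hy' : (4*p+12)*((2*p+5)*c + y) = (4*p+12)*(2*p+5+s) := by
        linear_combination hj - (2*p+5)*hcx
      have hyv : (2*p+5)*c + y = 2*p+5+s := mul_left_cancel₀ (by linarith) hy'
      nlinarith [mul_nonneg hc0 (show (0:ℤ) ≤ 2*p+7 by linarith)]
set_option maxHeartbeats 1000000

/-- Descent lemma: every nonneg combination `xD+yE` is congruent mod `A` to
one coming from the staircase Apéry region. -/
lemma tss_descent (q p s : ℕ) (hq : 2 ≤ q) (hqs : q*(p+1) = p+3+s) :
    ∀ μ x y : ℕ, x*(2*p+5) + y*(4*p+12) + x ≤ μ →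
    ∃ x' y' : ℕ, ((x' ≤ 4*p+11 ∧ y' ≤ s) ∨ (x' ≤ 2*p+4 ∧ y' ≤ 2*p+5+s)) ∧
      ((4*q*(p+3)*(p+1)+1 : ℤ)) ∣ ((x:ℤ)*(2*p+5) + (y:ℤ)*(4*p+12))
        - ((x':ℤ)*(2*p+5) + (y':ℤ)*(4*p+12)) := by
  have hAeq : (4*(q:ℤ)*(p+3)*(p+1)+1 : ℤ) = 4*(p:ℤ)^2+24*p+37 + s*(4*p+12) := by
    have hqs' : (q:ℤ)*(p+1) = (p:ℤ)+3+(s:ℤ) := by exact_mod_cast hqs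
    linear_combination (4*((p:ℤ)+3))*hqs'
  intro μ
  induction μ with
  | zero =>
    intro x y hxy
    have hx0 : x = 0 := by omega
    have hy0 : y = 0 := by
      rcases Nat.eq_zero_or_pos y with h | h
      · exact h
      · exfalso; nlinarith
    refine ⟨0, 0, Or.inr ⟨by omega, by omega⟩, by subst hx0 hy0; simp⟩
  | succ μ ih =>
    intro x y hxy
    by_cases h3 : 4*p+12 ≤ x
    · -- move M3 : (x,y) → (x-(4p+12), y+(2p+5)), value unchanged
      obtain ⟨x₀, rfl⟩ : ∃ x₀, x = x₀ + (4*p+12) := ⟨x - (4*p+12), by omega⟩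
      have hw : (x₀ + (4*p+12))*(2*p+5) + y*(4*p+12)
          = x₀*(2*p+5) + (y + (2*p+5))*(4*p+12) := by ring
      have hm : x₀*(2*p+5) + (y + (2*p+5))*(4*p+12) + x₀ ≤ μ := by
        have h12 : (1:ℕ) ≤ 4*p+12 := by omega
        linarith [hxy, hw]
      obtain ⟨x', y', hT, hdvd⟩ := ih x₀ (y + (2*p+5)) hm
      refine ⟨x', y', hT, ?_⟩
      obtain ⟨w, hw'⟩ := hdvd
      exact ⟨w, by push_cast at hw' ⊢; linear_combination hw'⟩
    · by_cases h4 : 2*p+5 ≤ x ∧ s+1 ≤ y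
      · -- move M1 : subtract (2p+5, s+1), value drops by A
        obtain ⟨x₀, rfl⟩ : ∃ x₀, x = x₀ + (2*p+5) := ⟨x - (2*p+5), by omega⟩
        obtain ⟨y₀, rfl⟩ : ∃ y₀, y = y₀ + (s+1) := ⟨y - (s+1), by omega⟩
        have hw : (x₀ + (2*p+5))*(2*p+5) + (y₀ + (s+1))*(4*p+12)
            = x₀*(2*p+5) + y₀*(4*p+12) + (4*p^2+24*p+37 + s*(4*p+12)) := by ring
        have hm : x₀*(2*p+5) + y₀*(4*p+12) + x₀ ≤ μ := by
          have : (1:ℕ) ≤ 4*p^2+24*p+37 + s*(4*p+12) := by nlinarith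
          linarith [hxy, hw]
        obtain ⟨x', y', hT, hdvd⟩ := ih x₀ y₀ hm
        refine ⟨x', y', hT, ?_⟩
        obtain ⟨w, hw'⟩ := hdvd
        refine ⟨w + 1, ?_⟩
        push_cast at hw' ⊢
        linear_combination hw' - hAeq
      · by_cases h5 : 2*p+6+s ≤ y
        · -- here x ≤ 2p+4 ; move M2 : (x,y) → (x+(2p+7), y-(2p+6+s)), value drops by A
          have hx5 : x ≤ 2*p+4 := by
            rcases Nat.lt_or_ge x (2*p+5) with h | h
            · omega
            · exact absurd ⟨h, by omega⟩ h4
          obtain ⟨y₀, rfl⟩ : ∃ y₀, y = y₀ + (2*p+6+s) := ⟨y - (2*p+6+s), by omega⟩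
          have hw : x*(2*p+5) + (y₀ + (2*p+6+s))*(4*p+12)
              = (x + (2*p+7))*(2*p+5) + y₀*(4*p+12) + (4*p^2+24*p+37 + s*(4*p+12)) := by
            ring
          have hm : (x + (2*p+7))*(2*p+5) + y₀*(4*p+12) + (x + (2*p+7)) ≤ μ := by
            have : 2*p+8 ≤ 4*p^2+24*p+37 + s*(4*p+12) := by nlinarith
            linarith [hxy, hw]
          obtain ⟨x', y', hT, hdvd⟩ := ih (x + (2*p+7)) y₀ hm
          refine ⟨x', y', hT, ?_⟩
          obtain ⟨w, hw'⟩ := hdvd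
          refine ⟨w + 1, ?_⟩
          push_cast at hw' ⊢
          linear_combination hw' - hAeq
        · -- terminal
          push_neg at h4 h5
          refine ⟨x, y, ?_, by simp⟩
          rcases le_or_gt y s with h6 | h6
          · exact Or.inl ⟨by omega, h6⟩
          · rcases le_or_gt x (2*p+4) with h7 | h7
            · exact Or.inr ⟨h7, by omega⟩
            · exact absurd (h4 (by omega)) (by omega)

lemma tss_mem_closure {A B C k : ℕ} :
    k ∈ AddSubmonoid.closure ({A, B, C} : Set ℕ) ↔ ∃ u x y : ℕ, u*A + x*B + y*C = k := by
  constructor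
  · intro hk
    induction hk using AddSubmonoid.closure_induction with
    | mem z hz =>
      simp only [Set.mem_insert_iff, Set.mem_singleton_iff] at hz
      rcases hz with rfl | rfl | rfl
      · exact ⟨1, 0, 0, by ring⟩
      · exact ⟨0, 1, 0, by ring⟩
      · exact ⟨0, 0, 1, by ring⟩
    | zero => exact ⟨0, 0, 0, by ring⟩
    | add w₁ w₂ h₁ h₂ ih₁ ih₂ =>
      obtain ⟨u₁, x₁, y₁, rfl⟩ := ih₁
      obtain ⟨u₂, x₂, y₂, rfl⟩ := ih₂
      exact ⟨u₁+u₂, x₁+x₂, y₁+y₂, by ring⟩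
  · rintro ⟨u, x, y, rfl⟩
    have hA : A ∈ ({A, B, C} : Set ℕ) := by simp
    have hB : B ∈ ({A, B, C} : Set ℕ) := by simp
    have hC : C ∈ ({A, B, C} : Set ℕ) := by simp
    have h1 := nsmul_mem (AddSubmonoid.subset_closure hA) u
    have h2 := nsmul_mem (AddSubmonoid.subset_closure hB) x
    have h3 := nsmul_mem (AddSubmonoid.subset_closure hC) y
    rw [smul_eq_mul] at h1 h2 h3
    exact add_mem (add_mem h1 h2) h3

lemma tss_coprime (p : ℕ) : Nat.Coprime (2*p+5) (4*p+12) := by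
  have h1 := Nat.gcd_dvd_left (2*p+5) (4*p+12)
  have h2 := Nat.gcd_dvd_right (2*p+5) (4*p+12)
  have h3 : Nat.gcd (2*p+5) (4*p+12) ∣ 2 := by
    have h4 : Nat.gcd (2*p+5) (4*p+12) ∣ 2*(2*p+5) := h1.mul_left 2
    have h5 := Nat.dvd_sub h2 h4
    simpa [show 4*p+12 - 2*(2*p+5) = 2 from by omega] using h5
  rcases (Nat.dvd_prime Nat.prime_two).mp h3 with h | h
  · exact h
  · exfalso
    rw [h] at h1
    omega

theorem frobenius_twoStepStar_zero_mod_four (a n : ℕ) (ha : 8 ≤ a) (ha4 : a % 4 = 0) (hn : 3 ≤ n) (hbig : 4 * n ≤ a * (n - 2)) :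
    ∃ g : ℕ,
      FrobeniusNumber g
        {twoStepStar a n, twoStepStar a (n + 1), twoStepStar a (n + 2)} ∧
      (g : ℚ) = (2 * (n : ℚ) - 2) * twoStepStar a (n + 1) + (((a : ℚ) * ((n : ℚ) - 2) + 4 * ((n : ℚ) - 1)) / 4) * twoStepStar a (n + 2) - twoStepStar a n := by
  obtain ⟨p, rfl⟩ : ∃ p, n = p + 3 := ⟨n - 3, by omega⟩
  obtain ⟨q, rfl⟩ : ∃ q, a = 4 * q := ⟨a / 4, by omega⟩
  have hq : 2 ≤ q := by omega
  have hb : p + 3 ≤ q * (p + 1) := by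
    rw [show p + 3 - 2 = p + 1 from by omega] at hbig
    nlinarith [hbig]
  obtain ⟨s, hqs⟩ := Nat.exists_eq_add_of_le hb
  have hqs' : (q:ℤ)*((p:ℤ)+1) = (p:ℤ)+3+(s:ℤ) := by exact_mod_cast hqs
  have e1 : twoStepStar (4*q) (p+3) = 4*q*(p+3)*(p+1)+1 := by
    unfold twoStepStar; rw [show p+3-2 = p+1 from by omega]
  have e2 : twoStepStar (4*q) (p+3+1) = 4*q*(p+4)*(p+2)+1 := by
    unfold twoStepStar
    rw [show p+3+1 = p+4 from by omega, show p+4-2 = p+2 from by omega]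
  have e3 : twoStepStar (4*q) (p+3+2) = 4*q*(p+5)*(p+3)+1 := by
    unfold twoStepStar
    rw [show p+3+2 = p+5 from by omega, show p+5-2 = p+3 from by omega]
  have hcorner_ge : 4*q*(p+3)*(p+1)+1
      ≤ (2*p+4)*(4*q*(p+4)*(p+2)+1) + (2*p+5+s)*(4*q*(p+5)*(p+3)+1) := by nlinarith
  refine ⟨(2*p+4)*(4*q*(p+4)*(p+2)+1) + (2*p+5+s)*(4*q*(p+5)*(p+3)+1)
      - (4*q*(p+3)*(p+1)+1), ?_, ?_⟩
  · rw [e1, e2, e3]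
    refine ⟨?_, ?_⟩
    · -- g is not representable
      simp only [Set.mem_setOf_eq]
      intro hcl
      obtain ⟨u, x, y, h⟩ := tss_mem_closure.mp hcl
      zify [hcorner_ge] at h
      have hdvd4 : (4*(q:ℤ)*((p:ℤ)+3)*((p:ℤ)+1)+1) ∣
          (((x:ℤ)*(2*(p:ℤ)+5) + (y:ℤ)*(4*(p:ℤ)+12))
            - ((2*(p:ℤ)+4)*(2*(p:ℤ)+5) + (2*(p:ℤ)+5+(s:ℤ))*(4*(p:ℤ)+12))) * (4*(q:ℤ)) := by
        refine ⟨(4*(p:ℤ)+8+(s:ℤ)) - (u:ℤ) - (x:ℤ) - (y:ℤ), ?_⟩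
        linear_combination h
      have hco : IsCoprime ((4*(q:ℤ)*((p:ℤ)+3)*((p:ℤ)+1)+1)) (4*(q:ℤ)) :=
        ⟨1, -(((p:ℤ)+3)*((p:ℤ)+1)), by ring⟩
      have hdvd := hco.dvd_of_dvd_mul_right hdvd4
      have hk := tss_key1 (q:ℤ) (p:ℤ) (s:ℤ) (x:ℤ) (y:ℤ) (by exact_mod_cast hq)
        (by positivity) (by positivity) (by positivity) (by positivity) hqs' hdvd
      have hu0 : (0:ℤ) ≤ (u:ℤ) * (4*(q:ℤ)*((p:ℤ)+3)*((p:ℤ)+1)+1) := by positivity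
      nlinarith [h, hk, hu0]
    · -- upper bound
      intro b hb
      by_contra hgt
      push_neg at hgt
      apply hb
      have hcop := tss_coprime p
      have hFrob := frobeniusNumber_pair hcop (by omega) (by omega)
      have hApos : 0 < 4*q*(p+3)*(p+1)+1 := by positivity
      have hrA : ((p+3)*(p+1)*b) % (4*q*(p+3)*(p+1)+1) < 4*q*(p+3)*(p+1)+1 :=
        Nat.mod_lt _ hApos
      obtain ⟨w, hw⟩ : ∃ w, w + ((p+3)*(p+1)*b) % (4*q*(p+3)*(p+1)+1)
          = 3*(4*q*(p+3)*(p+1)+1) :=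
        ⟨3*(4*q*(p+3)*(p+1)+1) - ((p+3)*(p+1)*b) % (4*q*(p+3)*(p+1)+1),
          Nat.sub_add_cancel (by linarith)⟩
      have hw1 : 2*(4*q*(p+3)*(p+1)+1) + 1 ≤ w := by linarith
      have hwF : (2*p+5)*(4*p+12) - (2*p+5) - (4*p+12) < w := by
        have hle := (Nat.sub_le ((2*p+5)*(4*p+12) - (2*p+5)) (4*p+12)).trans
          (Nat.sub_le ((2*p+5)*(4*p+12)) (2*p+5))
        nlinarith [hw1, hq, hle]
      have hwcl : w ∈ AddSubmonoid.closure ({2*p+5, 4*p+12} : Set ℕ) := by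
        by_contra hno
        exact absurd (hFrob.2 hno) (not_le.mpr hwF)
      obtain ⟨x, y, hxyw⟩ := (AddSubmonoid.mem_closure_pair _ _ _).mp hwcl
      rw [smul_eq_mul, smul_eq_mul] at hxyw
      obtain ⟨x', y', hT, hdvd⟩ :=
        tss_descent q p s hq hqs (x*(2*p+5)+y*(4*p+12)+x) x y le_rfl
      obtain ⟨d, hdvd'⟩ := hdvd
      have hwz : (w:ℤ) + (((p+3)*(p+1)*b) % (4*q*(p+3)*(p+1)+1) : ℕ)
          = 3*(4*(q:ℤ)*((p:ℤ)+3)*((p:ℤ)+1)+1) := by exact_mod_cast hw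
      have hKz : (4*(q:ℤ)*((p:ℤ)+3)*((p:ℤ)+1)+1)
            * ((((p+3)*(p+1)*b) / (4*q*(p+3)*(p+1)+1) : ℕ) : ℤ)
            + ((((p+3)*(p+1)*b) % (4*q*(p+3)*(p+1)+1) : ℕ) : ℤ)
          = ((p:ℤ)+3)*((p:ℤ)+1)*(b:ℤ) := by
        exact_mod_cast Nat.div_add_mod ((p+3)*(p+1)*b) (4*q*(p+3)*(p+1)+1)
      have hxyz : (x:ℤ)*(2*(p:ℤ)+5) + (y:ℤ)*(4*(p:ℤ)+12) = (w:ℤ) := by exact_mod_cast hxyw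
      have hmodb : (b:ℤ) - ((x':ℤ)*(4*(q:ℤ)*((p:ℤ)+4)*((p:ℤ)+2)+1)
            + (y':ℤ)*(4*(q:ℤ)*((p:ℤ)+5)*((p:ℤ)+3)+1))
          = (4*(q:ℤ)*((p:ℤ)+3)*((p:ℤ)+1)+1)
            * ((b:ℤ) - 12*(q:ℤ) - 4*(q:ℤ)*((((p+3)*(p+1)*b) / (4*q*(p+3)*(p+1)+1) : ℕ) : ℤ)
              + 4*(q:ℤ)*d - (x':ℤ) - (y':ℤ)) := by
        linear_combination (4*(q:ℤ))*hdvd' - 4*(q:ℤ)*hxyz - 4*(q:ℤ)*hwz + 4*(q:ℤ)*hKz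
      have hle : x'*(4*q*(p+4)*(p+2)+1) + y'*(4*q*(p+5)*(p+3)+1)
          ≤ (2*p+4)*(4*q*(p+4)*(p+2)+1) + (2*p+5+s)*(4*q*(p+5)*(p+3)+1) := by
        have hBC : (2*p+7)*(4*q*(p+4)*(p+2)+1) ≤ (2*p+5)*(4*q*(p+5)*(p+3)+1) := by
          nlinarith [hq]
        rcases hT with ⟨h1, h2⟩ | ⟨h1, h2⟩
        · have s1 := Nat.add_le_add (Nat.mul_le_mul_right (4*q*(p+4)*(p+2)+1) h1)
            (Nat.mul_le_mul_right (4*q*(p+5)*(p+3)+1) h2)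
          have e : (4*p+11)*(4*q*(p+4)*(p+2)+1) + s*(4*q*(p+5)*(p+3)+1)
                + (2*p+5)*(4*q*(p+5)*(p+3)+1)
              = (2*p+4)*(4*q*(p+4)*(p+2)+1) + (2*p+5+s)*(4*q*(p+5)*(p+3)+1)
                + (2*p+7)*(4*q*(p+4)*(p+2)+1) := by ring
          linarith [s1, hBC, e]
        · exact Nat.add_le_add (Nat.mul_le_mul_right _ h1) (Nat.mul_le_mul_right _ h2)
      zify [hcorner_ge] at hgt
      zify at hle
      have hu0 : 0 ≤ (b:ℤ) - 12*(q:ℤ) - 4*(q:ℤ)*((((p+3)*(p+1)*b) / (4*q*(p+3)*(p+1)+1) : ℕ) : ℤ)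
              + 4*(q:ℤ)*d - (x':ℤ) - (y':ℤ) := by
        have h9 : (4*(q:ℤ)*((p:ℤ)+3)*((p:ℤ)+1)+1) * (-1)
            < (4*(q:ℤ)*((p:ℤ)+3)*((p:ℤ)+1)+1)
              * ((b:ℤ) - 12*(q:ℤ) - 4*(q:ℤ)*((((p+3)*(p+1)*b) / (4*q*(p+3)*(p+1)+1) : ℕ) : ℤ)
                + 4*(q:ℤ)*d - (x':ℤ) - (y':ℤ)) := by
          rw [← hmodb]
          linarith [hgt, hle]
        have h10 := lt_of_mul_lt_mul_left h9 (by positivity :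
          (0:ℤ) ≤ 4*(q:ℤ)*((p:ℤ)+3)*((p:ℤ)+1)+1)
        linarith
      apply tss_mem_closure.mpr
      refine ⟨((b:ℤ) - 12*(q:ℤ) - 4*(q:ℤ)*((((p+3)*(p+1)*b) / (4*q*(p+3)*(p+1)+1) : ℕ) : ℤ)
              + 4*(q:ℤ)*d - (x':ℤ) - (y':ℤ)).toNat, x', y', ?_⟩
      have hfin : ((((b:ℤ) - 12*(q:ℤ)
              - 4*(q:ℤ)*((((p+3)*(p+1)*b) / (4*q*(p+3)*(p+1)+1) : ℕ) : ℤ)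
              + 4*(q:ℤ)*d - (x':ℤ) - (y':ℤ)).toNat : ℤ)) * (4*(q:ℤ)*((p:ℤ)+3)*((p:ℤ)+1)+1)
            + (x':ℤ)*(4*(q:ℤ)*((p:ℤ)+4)*((p:ℤ)+2)+1)
            + (y':ℤ)*(4*(q:ℤ)*((p:ℤ)+5)*((p:ℤ)+3)+1) = (b:ℤ) := by
        rw [Int.toNat_of_nonneg hu0]
        linarith [hmodb]
      exact_mod_cast hfin
  · -- the rational equation
    rw [e1, e2, e3, Nat.cast_sub hcorner_ge]
    have hqsQ : (q:ℚ)*((p:ℚ)+1) = (p:ℚ)+3+(s:ℚ) := by exact_mod_cast hqs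
    push_cast
    linear_combination (-(4*(q:ℚ)*((p:ℚ)+5)*((p:ℚ)+3)+1))*hqsQ
end

section
/- Let a and n be integers with a ≥ 5, a ≡ 1 (mod 4), n ≥ 3, n ≡ 0 (mod 4), and a(n−2) ≥ 8n−2. Then the Frobenius number of the triple {S_{a,n}, S_{a,n+1}, S_{a,n+2}} equals (4n−2)·S_{a,n+1} + ((a(n−2)−2)/4)·S_{a,n+2} − S_{a,n}. -/
namespace StarAux

lemma mem_closure_triple (x y z k : ℕ) : k ∈ AddSubmonoid.closure ({x, y, z} : Set ℕ) ↔
    ∃ α β γ : ℕ, k = α * x + β * y + γ * z := by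
  rw [show ({x, y, z} : Set ℕ) = {x} ∪ {y, z} by rfl, AddSubmonoid.closure_union,
    AddSubmonoid.mem_sup]
  constructor
  · rintro ⟨u, hu, v, hv, rfl⟩
    rw [AddSubmonoid.mem_closure_singleton] at hu
    rw [AddSubmonoid.mem_closure_pair _ _ _] at hv
    obtain ⟨α, rfl⟩ := hu
    obtain ⟨β, γ, rfl⟩ := hv
    exact ⟨α, β, γ, by simp [smul_eq_mul, add_assoc]⟩
  · rintro ⟨α, β, γ, rfl⟩
    exact ⟨α * x, AddSubmonoid.mem_closure_singleton.2 ⟨α, by simp [smul_eq_mul]⟩,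
      β * y + γ * z, (AddSubmonoid.mem_closure_pair _ _ _).2 ⟨β, γ, by simp [smul_eq_mul]⟩,
      by ring⟩

/-- `m*x + y ≡ y [MOD m]`. -/
lemma mul_add_modEq (m x y : ℕ) : m * x + y ≡ y [MOD m] := by
  simpa using (Nat.ModEq.add_right y (Nat.modEq_zero_iff_dvd.mpr (dvd_mul_right m x)))

/-- inverse of `2p+3` mod `4p+8` is itself. -/
lemma inv_step (p β r : ℕ) (h : (2*p+3) * β ≡ r [MOD 4*p+8]) :
    β ≡ (2*p+3) * r [MOD 4*p+8] := by
  have h2 : (2*p+3) * ((2*p+3) * β) ≡ (2*p+3) * r [MOD 4*p+8] := h.mul_left _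
  have h3 : (2*p+3) * ((2*p+3) * β) = (4*p+8) * ((p+1) * β) + β := by ring
  rw [h3] at h2
  exact (mul_add_modEq (4*p+8) ((p+1)*β) β).symm.trans h2

section Main

variable (a p q e : ℕ)

/-- key inequality K1 : `(2p+3)·c ≤ (4p+8)·b` -/
lemma K1 (ha : 5 ≤ a) (hp : 2 ≤ p) :
    (2*p+3) * (a*(p+4)*(p+2)+1) ≤ (4*p+8) * (a*(p+3)*(p+1)+1) := by
  have h : (4*p+8) * (a*(p+3)*(p+1)+1) =
      (2*p+3) * (a*(p+4)*(p+2)+1) + (a*p*(p+2)*(2*p+5) + (2*p+5)) := by ring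
  omega

/-- key inequality K2 -/
lemma K2 (ha : 5 ≤ a) (hp : 2 ≤ p) (hq : a * p = 4*q+2) (he : q = 2*p+3+e) :
    (4*p+8) * ((4*p+6) * (a*(p+3)*(p+1)+1) + q * (a*(p+4)*(p+2)+1)) ≤
      (a*(p+4)*(p+2)+1) * (2 * (a*(p+2)*p+1) + (8*p*p+22*p+13)) := by
  subst he
  have key : a * p = 8*p + 14 + 4*e := by rw [hq]; ring
  have keyz : (a : ℤ) * p = 8*p + 14 + 4*e := by exact_mod_cast key
  have hid : (a*(p+4)*(p+2)+1) * (2 * (a*(p+2)*p+1) + (8*p*p+22*p+13))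
        + (8*p*p+32*p+29) + a*(8*p^4+48*p^3+92*p^2+52*p)
      = (4*p+8) * ((4*p+6) * (a*(p+3)*(p+1)+1) + (2*p+3+e) * (a*(p+4)*(p+2)+1))
        + a*((8*p+14+4*e)*(p^3+8*p^2+20*p+16)) + 8*a := by
    zify
    linear_combination (2*(a:ℤ)*(p^3+8*p^2+20*p+16) + p + 2) * keyz
  have hexp : a*((8*p+14+4*e)*(p^3+8*p^2+20*p+16)) + 8*a
      = a*(8*p^4+48*p^3+92*p^2+52*p) + a*(30*p^3+180*p^2+356*p+232)
        + a*(4*e*(p^3+8*p^2+20*p+16)) := by ring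
  have hU : 8*p*p+32*p+29 ≤ 5*(30*p^3+180*p^2+356*p+232) := by nlinarith [hp]
  have h5 : 5*(30*p^3+180*p^2+356*p+232) ≤ a*(30*p^3+180*p^2+356*p+232) :=
    Nat.mul_le_mul_right _ ha
  have hbound : (8*p*p+32*p+29) + a*(8*p^4+48*p^3+92*p^2+52*p)
      ≤ a*((8*p+14+4*e)*(p^3+8*p^2+20*p+16)) + 8*a := by
    rw [hexp]
    have := Nat.zero_le (a*(4*e*(p^3+8*p^2+20*p+16)))
    omega
  omega

/-- `ρ* < s` -/
lemma rho_lt_s (hq : a * p = 4*q+2) (he : q = 2*p+3+e) :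
    8*p*p+22*p+13 < a*(p+2)*p+1 := by
  have h : a*(p+2)*p = (4*q+2)*(p+2) := by
    have : a*(p+2)*p = (a*p)*(p+2) := by ring
    rw [this, hq]
  nlinarith [he]

/-- `s = M*q + (2p+5)` -/
lemma s_eq (hq : a * p = 4*q+2) :
    a*(p+2)*p+1 = (4*p+8) * q + (2*p+5) := by
  have h : a*(p+2)*p = (4*q+2)*(p+2) := by
    have : a*(p+2)*p = (a*p)*(p+2) := by ring
    rw [this, hq]
  rw [h]; ring

/-- `t* = s + ρ*` -/
lemma tstar_eq (hq : a * p = 4*q+2) :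
    (2*p+3)*(4*p+6) + (4*p+8)*q = (a*(p+2)*p+1) + (8*p*p+22*p+13) := by
  rw [s_eq a p q hq]; ring

/-- Lemma A -/
lemma lemA (ha : 5 ≤ a) (hp : 2 ≤ p) (hq : a * p = 4*q+2) (he : q = 2*p+3+e)
    (β γ : ℕ)
    (h : (2*p+3)*β + (4*p+8)*γ ≡ 8*p*p+22*p+13 [MOD a*(p+2)*p+1]) :
    (4*p+6) * (a*(p+3)*(p+1)+1) + q * (a*(p+4)*(p+2)+1) ≤
      β * (a*(p+3)*(p+1)+1) + γ * (a*(p+4)*(p+2)+1) := by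
  set s := a*(p+2)*p+1 with hs
  set b := a*(p+3)*(p+1)+1 with hb
  set c := a*(p+4)*(p+2)+1 with hc
  set t := (2*p+3)*β + (4*p+8)*γ with htdef
  have hρ : 8*p*p+22*p+13 < s := rho_lt_s a p q e hq he
  have hseq : s = (4*p+8)*q + (2*p+5) := s_eq a p q hq
  have hK1 : (2*p+3) * c ≤ (4*p+8) * b := K1 a p ha hp
  have ht : t % s = 8*p*p+22*p+13 := by
    have h' : t % s = (8*p*p+22*p+13) % s := h
    rw [Nat.mod_eq_of_lt hρ] at h'
    exact h'
  obtain ⟨k, hts⟩ : ∃ k, s * k + (8*p*p+22*p+13) = t :=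
    ⟨t / s, by rw [← ht]; exact Nat.div_add_mod t s⟩
  match k, hts with
  | 0, hts =>
    exfalso
    have heq : (2*p+3)*β + (4*p+8)*γ = 8*p*p+22*p+13 := by
      rw [← htdef, ← hts]; ring
    have h1 : (2*p+3)*β ≡ 8*p*p+22*p+13 [MOD 4*p+8] := by
      have : (4*p+8)*γ + (2*p+3)*β ≡ (2*p+3)*β [MOD 4*p+8] := mul_add_modEq _ _ _
      rw [show (4*p+8)*γ + (2*p+3)*β = (2*p+3)*β + (4*p+8)*γ by ring, heq] at this
      exact this.symm
    have h2 : β ≡ (2*p+3)*(8*p*p+22*p+13) [MOD 4*p+8] := inv_step p β _ h1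
    have h3 : (2*p+3)*(8*p*p+22*p+13) = (4*p+8)*(4*p*p+9*p+4) + (4*p+7) := by ring
    have h4 : β ≡ 4*p+7 [MOD 4*p+8] := h2.trans (by rw [h3]; exact mul_add_modEq _ _ _)
    have h5 : 4*p+7 ≤ β := by
      have h4' : β % (4*p+8) = (4*p+7) % (4*p+8) := h4
      rw [Nat.mod_eq_of_lt (show 4*p+7 < 4*p+8 by omega)] at h4'
      calc 4*p+7 = β % (4*p+8) := h4'.symm
        _ ≤ β := Nat.mod_le _ _
    have h6 : (2*p+3)*(4*p+7) ≤ (2*p+3)*β := Nat.mul_le_mul_left _ h5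
    nlinarith [heq, h6]
  | 1, hts =>
    have heq : s * 1 + (8*p*p+22*p+13) = (2*p+3)*β + (4*p+8)*γ := hts
    have h1 : (2*p+3)*β ≡ s + (8*p*p+22*p+13) [MOD 4*p+8] := by
      have hmm : (4*p+8)*γ + (2*p+3)*β ≡ (2*p+3)*β [MOD 4*p+8] := mul_add_modEq _ _ _
      rw [show (4*p+8)*γ + (2*p+3)*β = (2*p+3)*β + (4*p+8)*γ by ring, ← heq] at hmm
      simpa using hmm.symm
    have h2 : s + (8*p*p+22*p+13) = (4*p+8)*(q+2*p+2) + 2 := by rw [hseq]; ring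
    have h3 : (2*p+3)*β ≡ 2 [MOD 4*p+8] := h1.trans (by rw [h2]; exact mul_add_modEq _ _ _)
    have h4 : β ≡ (2*p+3)*2 [MOD 4*p+8] := inv_step p β _ h3
    have h5 : β % (4*p+8) = 4*p+6 := by
      have h4' : β % (4*p+8) = ((2*p+3)*2) % (4*p+8) := h4
      rw [show (2*p+3)*2 = 4*p+6 by ring, Nat.mod_eq_of_lt (show 4*p+6 < 4*p+8 by omega)] at h4'
      exact h4'
    obtain ⟨j, hj⟩ : ∃ j, β = (4*p+8)*j + (4*p+6) :=
      ⟨β / (4*p+8), by nth_rewrite 1 [← Nat.div_add_mod β (4*p+8)]; rw [h5]⟩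
    have hjq : (2*p+3)*j + γ = q := by
      have hMeq : (4*p+8)*((2*p+3)*j + γ) = (4*p+8)*q := by
        zify at heq hj hseq ⊢
        linear_combination (-1 : ℤ)*heq - (2*p+3)*hj + hseq
      exact Nat.eq_of_mul_eq_mul_left (by omega) hMeq
    have hj2 : ((2*p+3)*j)*c ≤ ((4*p+8)*j)*b := by
      calc ((2*p+3)*j)*c = j*((2*p+3)*c) := by ring
        _ ≤ j*((4*p+8)*b) := Nat.mul_le_mul_left _ hK1
        _ = ((4*p+8)*j)*b := by ring
    have heq2 : β*b + γ*c + ((2*p+3)*j)*c = ((4*p+6)*b + q*c) + ((4*p+8)*j)*b := by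
      rw [hj, ← hjq]; ring
    linarith [heq2, hj2]
  | (k+2), hts =>
    have hK2 : (4*p+8) * ((4*p+6) * b + q * c) ≤ c * (2 * s + (8*p*p+22*p+13)) :=
      K2 a p q e ha hp hq he
    have i1 : c * t ≤ (4*p+8) * (β*b + γ*c) := by
      calc c * t = β*((2*p+3)*c) + ((4*p+8)*γ)*c := by rw [htdef]; ring
        _ ≤ β*((4*p+8)*b) + ((4*p+8)*γ)*c := by
            exact Nat.add_le_add_right (Nat.mul_le_mul_left _ hK1) _
        _ = (4*p+8)*(β*b+γ*c) := by ring
    have h2s : 2*s + (8*p*p+22*p+13) ≤ t := by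
      have hm : s*2 ≤ s*(k+2) := Nat.mul_le_mul_left _ (by omega)
      linarith [hts, hm]
    have i3 : c * (2*s + (8*p*p+22*p+13)) ≤ c * t := Nat.mul_le_mul_left _ h2s
    have := le_trans hK2 (le_trans i3 i1)
    exact Nat.le_of_mul_le_mul_left this (by omega)

/-- bound on t over the Apéry region -/
lemma t_bound (hq : a * p = 4*q+2) (he : q = 2*p+3+e) (x y : ℕ)
    (hv : (x < 4*p+7 ∧ y < q+1) ∨ (x = 4*p+7 ∧ y < e+1)) :
    (2*p+3)*x + (4*p+8)*y ≤ (a*(p+2)*p+1) + (8*p*p+22*p+13) := by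
  rw [← tstar_eq a p q hq]
  rcases hv with ⟨hx, hy⟩ | ⟨hx, hy⟩
  · exact add_le_add (Nat.mul_le_mul_left _ (by omega)) (Nat.mul_le_mul_left _ (by omega))
  · subst hx he
    have hyc : (4*p+8)*y ≤ (4*p+8)*e := Nat.mul_le_mul_left _ (by omega)
    nlinarith [hyc]

/-- directed injectivity -/
lemma inj_aux (ha : 5 ≤ a) (hp : 2 ≤ p) (hq : a * p = 4*q+2) (he : q = 2*p+3+e)
    (x y x' y' : ℕ)
    (hv : (x < 4*p+7 ∧ y < q+1) ∨ (x = 4*p+7 ∧ y < e+1))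
    (hw : (x' < 4*p+7 ∧ y' < q+1) ∨ (x' = 4*p+7 ∧ y' < e+1))
    (hle : (2*p+3)*x + (4*p+8)*y ≤ (2*p+3)*x' + (4*p+8)*y')
    (hmod : (2*p+3)*x + (4*p+8)*y ≡ (2*p+3)*x' + (4*p+8)*y' [MOD a*(p+2)*p+1]) :
    x = x' ∧ y = y' := by
  set s := a*(p+2)*p+1 with hs
  have hseq : s = (4*p+8)*q + (2*p+5) := s_eq a p q hq
  have hρ : 8*p*p+22*p+13 < s := rho_lt_s a p q e hq he
  obtain ⟨d, hd⟩ := (Nat.modEq_iff_dvd' hle).mp hmod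
  have htw : (2*p+3)*x' + (4*p+8)*y' ≤ s + (8*p*p+22*p+13) := t_bound a p q e hq he x' y' hw
  have hd' : (2*p+3)*x' + (4*p+8)*y' = (2*p+3)*x + (4*p+8)*y + s*d := by omega
  have hxb : x ≤ 4*p+7 := by rcases hv with ⟨h1,_⟩|⟨h1,_⟩ <;> omega
  have hxb' : x' ≤ 4*p+7 := by rcases hw with ⟨h1,_⟩|⟨h1,_⟩ <;> omega
  have hyb : y ≤ q := by rcases hv with ⟨_,h1⟩|⟨_,h1⟩ <;> omega
  have hyb' : y' ≤ q := by rcases hw with ⟨_,h1⟩|⟨_,h1⟩ <;> omega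
  have hd2 : d < 2 := by
    by_contra hcon
    have : s*2 ≤ s*d := Nat.mul_le_mul_left _ (by omega)
    omega
  interval_cases d
  · -- equal
    have heq : (2*p+3)*x' + (4*p+8)*y' = (2*p+3)*x + (4*p+8)*y := by omega
    have h1 : (2*p+3)*x ≡ (2*p+3)*x' [MOD 4*p+8] := by
      have e1 : (4*p+8)*y + (2*p+3)*x ≡ (2*p+3)*x [MOD 4*p+8] := mul_add_modEq _ _ _
      have e2 : (4*p+8)*y' + (2*p+3)*x' ≡ (2*p+3)*x' [MOD 4*p+8] := mul_add_modEq _ _ _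
      rw [show (4*p+8)*y + (2*p+3)*x = (2*p+3)*x + (4*p+8)*y by ring] at e1
      rw [show (4*p+8)*y' + (2*p+3)*x' = (2*p+3)*x' + (4*p+8)*y' by ring, heq] at e2
      exact e1.symm.trans e2
    have h2 : x ≡ (2*p+3)*((2*p+3)*x') [MOD 4*p+8] := inv_step p x _ h1
    have h3 : (2*p+3)*((2*p+3)*x') = (4*p+8)*((p+1)*x') + x' := by ring
    have h4 : x ≡ x' [MOD 4*p+8] := h2.trans (by rw [h3]; exact mul_add_modEq _ _ _)
    have h5 : x = x' := by
      have h4' : x % (4*p+8) = x' % (4*p+8) := h4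
      rw [Nat.mod_eq_of_lt (show x < 4*p+8 by omega),
        Nat.mod_eq_of_lt (show x' < 4*p+8 by omega)] at h4'
      exact h4'
    subst h5
    refine ⟨rfl, ?_⟩
    have h6 : (4*p+8)*y = (4*p+8)*y' := by omega
    exact Nat.eq_of_mul_eq_mul_left (by omega) h6
  · -- difference s : contradiction
    exfalso
    have heq : (2*p+3)*x' + (4*p+8)*y' = (2*p+3)*x + (4*p+8)*y + s := by omega
    have h1 : (2*p+3)*x' ≡ (2*p+3)*x + (2*p+5) [MOD 4*p+8] := by
      have e2 : (4*p+8)*y' + (2*p+3)*x' ≡ (2*p+3)*x' [MOD 4*p+8] := mul_add_modEq _ _ _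
      rw [show (4*p+8)*y' + (2*p+3)*x' = (2*p+3)*x' + (4*p+8)*y' by ring, heq] at e2
      have e1 : (4*p+8)*(y+q) + ((2*p+3)*x + (2*p+5)) ≡ (2*p+3)*x + (2*p+5) [MOD 4*p+8] :=
        mul_add_modEq _ _ _
      rw [show (4*p+8)*(y+q) + ((2*p+3)*x + (2*p+5))
        = (2*p+3)*x + (4*p+8)*y + ((4*p+8)*q + (2*p+5)) by ring, ← hseq] at e1
      exact e2.symm.trans e1
    have h2 : x' ≡ (2*p+3)*((2*p+3)*x + (2*p+5)) [MOD 4*p+8] := inv_step p x' _ h1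
    have h3 : (2*p+3)*((2*p+3)*x + (2*p+5)) = (4*p+8)*((p+1)*x + (p+1)) + (x + (4*p+7)) := by
      ring
    have h4 : x' ≡ x + (4*p+7) [MOD 4*p+8] := h2.trans (by rw [h3]; exact mul_add_modEq _ _ _)
    have hqz : (a : ℤ) * p = 4*q+2 := by exact_mod_cast hq
    have hez : (q : ℤ) = 2*p+3+e := by exact_mod_cast he
    have heqz : (2*(p:ℤ)+3)*x' + (4*p+8)*y' = (2*p+3)*x + (4*p+8)*y + (a*(p+2)*p+1) := by
      exact_mod_cast heq
    rcases Nat.eq_zero_or_pos x with hx0 | hxpos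
    · subst hx0
      have h5 : x' = 4*p+7 := by
        have h4' : x' % (4*p+8) = (0 + (4*p+7)) % (4*p+8) := h4
        rw [Nat.mod_eq_of_lt (show x' < 4*p+8 by omega),
          Nat.mod_eq_of_lt (show 0 + (4*p+7) < 4*p+8 by omega)] at h4'
        omega
      have hwe : y' ≤ e := by rcases hw with ⟨h1',_⟩|⟨_,h1'⟩ <;> omega
      have hMeq : (4*p+8)*y' = (4*p+8)*(y+e+1) := by
        have hxz : (x' : ℤ) = 4*p+7 := by exact_mod_cast h5
        zify
        push_cast at heqz ⊢
        linear_combination heqz - (2*(p:ℤ)+3)*hxz + ((p:ℤ)+2)*hqz + (4*(p:ℤ)+8)*hez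
      have : y' = y+e+1 := Nat.eq_of_mul_eq_mul_left (by omega) hMeq
      omega
    · obtain ⟨z, hz⟩ : ∃ z, x = z + 1 := ⟨x - 1, by omega⟩
      subst hz
      have h4' : x' ≡ z [MOD 4*p+8] := by
        have e3 : (4*p+8)*1 + z ≡ z [MOD 4*p+8] := mul_add_modEq _ _ _
        rw [show (4*p+8)*1 + z = z + 1 + (4*p+7) by ring] at e3
        exact h4.trans e3
      have h5 : x' = z := by
        have h4'' : x' % (4*p+8) = z % (4*p+8) := h4'
        rw [Nat.mod_eq_of_lt (show x' < 4*p+8 by omega),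
          Nat.mod_eq_of_lt (show z < 4*p+8 by omega)] at h4''
        exact h4''
      subst h5
      have hMeq : (4*p+8)*y' = (4*p+8)*(y+q+1) := by
        zify
        push_cast at heqz ⊢
        linear_combination heqz + ((p:ℤ)+2)*hqz
      have : y' = y+q+1 := Nat.eq_of_mul_eq_mul_left (by omega) hMeq
      omega

/-- Lemma surj/exists_rep : every residue has a representative of cost ≤ cost*. -/
lemma exists_rep (ha : 5 ≤ a) (hp : 2 ≤ p) (hq : a * p = 4*q+2) (he : q = 2*p+3+e) (k : ℕ) :
    ∃ x y : ℕ,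
      x * (a*(p+3)*(p+1)+1) + y * (a*(p+4)*(p+2)+1) ≤
        (4*p+6) * (a*(p+3)*(p+1)+1) + q * (a*(p+4)*(p+2)+1) ∧
      x * (a*(p+3)*(p+1)+1) + y * (a*(p+4)*(p+2)+1) ≡ k [MOD a*(p+2)*p+1] := by
  set s := a*(p+2)*p+1 with hs
  set b := a*(p+3)*(p+1)+1 with hb
  set c := a*(p+4)*(p+2)+1 with hc
  haveI : NeZero s := ⟨by positivity⟩
  have hco : Nat.Coprime a s := by
    have h1 : s = 1 + ((p+2)*p) * a := by rw [hs]; ring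
    unfold Nat.Coprime
    rw [h1, Nat.gcd_add_mul_right_right a 1 ((p+2)*p), Nat.gcd_one_right]
  set F : ℕ × ℕ → ZMod s := fun v => (((2*p+3)*v.1 + (4*p+8)*v.2 : ℕ) : ZMod s) with hF
  set R : Finset (ℕ × ℕ) :=
    Finset.range (4*p+7) ×ˢ Finset.range (q+1) ∪ {4*p+7} ×ˢ Finset.range (e+1) with hR
  have memR : ∀ v : ℕ × ℕ, v ∈ R ↔
      ((v.1 < 4*p+7 ∧ v.2 < q+1) ∨ (v.1 = 4*p+7 ∧ v.2 < e+1)) := by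
    intro v
    simp only [hR, Finset.mem_union, Finset.mem_product, Finset.mem_range,
      Finset.mem_singleton]
  have hinj : Set.InjOn F R := by
    intro v hv w hw hFvw
    have hv' := (memR v).mp hv
    have hw' := (memR w).mp hw
    have hmod : (2*p+3)*v.1 + (4*p+8)*v.2 ≡ (2*p+3)*w.1 + (4*p+8)*w.2 [MOD s] :=
      (ZMod.natCast_eq_natCast_iff _ _ _).mp hFvw
    rcases le_total ((2*p+3)*v.1 + (4*p+8)*v.2) ((2*p+3)*w.1 + (4*p+8)*w.2) with hle | hle
    · obtain ⟨h1, h2⟩ := inj_aux a p q e ha hp hq he v.1 v.2 w.1 w.2 hv' hw' hle hmod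
      exact Prod.ext h1 h2
    · obtain ⟨h1, h2⟩ := inj_aux a p q e ha hp hq he w.1 w.2 v.1 v.2 hw' hv' hle hmod.symm
      exact Prod.ext h1.symm h2.symm
  have hcardR : R.card = s := by
    have hdisj : Disjoint (Finset.range (4*p+7) ×ˢ Finset.range (q+1))
        (({4*p+7} : Finset ℕ) ×ˢ Finset.range (e+1)) := by
      rw [Finset.disjoint_left]
      rintro ⟨u1, u2⟩ h1 h2
      simp [Finset.mem_product] at h1 h2
      omega
    rw [hR, Finset.card_union_of_disjoint hdisj, Finset.card_product, Finset.card_product]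
    simp only [Finset.card_range, Finset.card_singleton]
    have hqz : (a : ℤ) * p = 4*q+2 := by exact_mod_cast hq
    have hez : (q : ℤ) = 2*p+3+e := by exact_mod_cast he
    have : (4*p+7)*(q+1) + 1*(e+1) = s := by
      rw [hs]
      zify
      linear_combination (-((p:ℤ)+2))*hqz - hez
    omega
  have himg : R.image F = Finset.univ := by
    apply Finset.eq_univ_of_card
    rw [Finset.card_image_of_injOn hinj, hcardR, ZMod.card]
  set u : (ZMod s)ˣ := ZMod.unitOfCoprime a hco with hu
  set τ : ZMod s := ((u⁻¹ : (ZMod s)ˣ) : ZMod s) * (k : ZMod s) with hτ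
  obtain ⟨v, hvR, hFv⟩ := Finset.mem_image.mp (himg ▸ Finset.mem_univ τ)
  obtain ⟨x, y⟩ := v
  have hv' := (memR (x, y)).mp hvR
  refine ⟨x, y, ?_, ?_⟩
  · -- cost bound
    have hbc : b ≤ c := by
      rw [hb, hc]
      have : a*(p+3)*(p+1) ≤ a*(p+4)*(p+2) := by nlinarith
      omega
    rcases hv' with ⟨hx, hy⟩ | ⟨hx, hy⟩
    · exact add_le_add (Nat.mul_le_mul_right _ (by omega)) (Nat.mul_le_mul_right _ (by omega))
    · subst hx he
      have hyc : y*c ≤ e*c := Nat.mul_le_mul_right _ (by omega)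
      nlinarith [hbc, hyc]
  · -- congruence
    have hcast : ((a * ((2*p+3)*x + (4*p+8)*y) : ℕ) : ZMod s) = ((k : ℕ) : ZMod s) := by
      push_cast
      have hFv' : (((2*p+3)*x + (4*p+8)*y : ℕ) : ZMod s) = τ := hFv
      push_cast at hFv'
      rw [hFv', hτ]
      have hua : ((u : (ZMod s)ˣ) : ZMod s) = (a : ZMod s) := ZMod.coe_unitOfCoprime a hco
      calc (a : ZMod s) * (((u⁻¹ : (ZMod s)ˣ) : ZMod s) * (k : ZMod s))
          = (((u : (ZMod s)ˣ) : ZMod s) * ((u⁻¹ : (ZMod s)ˣ) : ZMod s)) * (k : ZMod s) := by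
            rw [hua]; ring
        _ = (((u * u⁻¹ : (ZMod s)ˣ) : ZMod s)) * (k : ZMod s) := by rw [Units.val_mul]
        _ = (k : ZMod s) := by rw [mul_inv_cancel]; simp
    have hmod1 : a*((2*p+3)*x + (4*p+8)*y) ≡ k [MOD s] :=
      (ZMod.natCast_eq_natCast_iff _ _ _).mp hcast
    have hxy : x*b + y*c = s*(x+y) + a*((2*p+3)*x + (4*p+8)*y) := by
      rw [hs, hb, hc]; ring
    rw [hxy]
    exact (mul_add_modEq s (x+y) _).trans hmod1

end Main

end StarAux

open StarAux in
theorem frobenius_twoStepStar_one_zero (a n : ℕ) (ha : 5 ≤ a) (ha4 : a % 4 = 1) (hn : 3 ≤ n) (hn4 : n % 4 = 0) (hbig : 8 * n - 2 ≤ a * (n - 2)) :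
    ∃ g : ℕ,
      FrobeniusNumber g
        {twoStepStar a n, twoStepStar a (n + 1), twoStepStar a (n + 2)} ∧
      (g : ℚ) = (4 * (n : ℚ) - 2) * twoStepStar a (n + 1) + (((a : ℚ) * ((n : ℚ) - 2) - 2) / 4) * twoStepStar a (n + 2) - twoStepStar a n := by
  obtain ⟨p, hp, rfl⟩ : ∃ p, 2 ≤ p ∧ n = p + 2 := ⟨n - 2, by omega, by omega⟩
  have hp4 : p % 4 = 2 := by omega
  obtain ⟨q, hq⟩ : ∃ q, a * p = 4 * q + 2 := by
    have h1 : (a * p) % 4 = 2 := by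
      have h2 := Nat.mul_mod a p 4
      rw [ha4, hp4] at h2
      omega
    exact ⟨a * p / 4, by omega⟩
  obtain ⟨e, he⟩ : ∃ e, q = 2*p+3+e := by
    have h2 : p + 2 - 2 = p := by omega
    rw [h2] at hbig
    refine ⟨q - (2*p+3), by omega⟩
  set s := a*(p+2)*p+1 with hs
  set b := a*(p+3)*(p+1)+1 with hb
  set c := a*(p+4)*(p+2)+1 with hc
  have hts1 : twoStepStar a (p+2) = s := by
    unfold twoStepStar
    have h : p+2-2 = p := by omega
    rw [h, hs]
  have hts2 : twoStepStar a (p+2+1) = b := by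
    unfold twoStepStar
    have h : p+2+1-2 = p+1 := by omega
    rw [h, hb]
  have hts3 : twoStepStar a (p+2+2) = c := by
    unfold twoStepStar
    have h : p+2+2-2 = p+2 := by omega
    rw [h, hc]
  have hcop : Nat.Coprime a s := by
    have h1 : s = 1 + ((p+2)*p) * a := by rw [hs]; ring
    unfold Nat.Coprime
    rw [h1, Nat.gcd_add_mul_right_right a 1 ((p+2)*p), Nat.gcd_one_right]
  -- cost* ≥ s
  have hc5 : 5*(p+2) ≤ c := by rw [hc]; nlinarith
  have hsq : s = (4*q+2)*(p+2)+1 := by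
    rw [hs, show a*(p+2)*p = (a*p)*(p+2) by ring, hq]
  have hcost_ge_s : s ≤ (4*p+6)*b + q*c := by
    have h1 : q*(5*(p+2)) ≤ q*c := Nat.mul_le_mul_left _ hc5
    have h2 : 1 ≤ (4*p+6)*b := by
      have : 0 < (4*p+6)*b := by rw [hb]; positivity
      omega
    nlinarith [h1, h2, he]
  set g := (4*p+6)*b + q*c - s with hg
  have hgs : g + s = (4*p+6)*b + q*c := by omega
  refine ⟨g, ?_, ?_⟩
  · rw [hts1, hts2, hts3]
    constructor
    · -- g is not representable
      rw [Set.mem_setOf_eq, mem_closure_triple]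
      rintro ⟨α, β, γ, hrep⟩
      -- congruences
      have h1 : β*b + γ*c ≡ a*((2*p+3)*β + (4*p+8)*γ) [MOD s] := by
        have hid : β*b + γ*c = s*(β+γ) + a*((2*p+3)*β + (4*p+8)*γ) := by
          rw [hs, hb, hc]; ring
        rw [hid]
        exact mul_add_modEq _ _ _
      have h2 : (4*p+6)*b + q*c ≡ a*((2*p+3)*(4*p+6) + (4*p+8)*q) [MOD s] := by
        have hid : (4*p+6)*b + q*c = s*(4*p+6+q) + a*((2*p+3)*(4*p+6) + (4*p+8)*q) := by
          rw [hs, hb, hc]; ring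
        rw [hid]
        exact mul_add_modEq _ _ _
      have h3 : g ≡ (4*p+6)*b + q*c [MOD s] := by
        have : s*1 + g ≡ g [MOD s] := mul_add_modEq _ _ _
        rw [show s*1 + g = g + s by ring, hgs] at this
        exact this.symm
      have h4 : g ≡ β*b + γ*c [MOD s] := by
        have : s*α + (β*b + γ*c) ≡ β*b + γ*c [MOD s] := mul_add_modEq _ _ _
        rw [show s*α + (β*b + γ*c) = α*s + β*b + γ*c by ring, ← hrep] at this
        exact this
      have h5 : a*((2*p+3)*β + (4*p+8)*γ) ≡ a*((2*p+3)*(4*p+6) + (4*p+8)*q) [MOD s] :=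
        (h1.symm.trans (h4.symm.trans (h3.trans h2)))
      have h6 : (2*p+3)*β + (4*p+8)*γ ≡ (2*p+3)*(4*p+6) + (4*p+8)*q [MOD s] :=
        Nat.ModEq.cancel_left_of_coprime (Nat.Coprime.symm hcop) h5
      have h7 : (2*p+3)*(4*p+6) + (4*p+8)*q ≡ 8*p*p+22*p+13 [MOD s] := by
        have hteq : (2*p+3)*(4*p+6) + (4*p+8)*q = s*1 + (8*p*p+22*p+13) := by
          rw [tstar_eq a p q hq, ← hs]; ring
        rw [hteq]
        exact mul_add_modEq _ _ _
      have h8 := lemA a p q e ha hp hq he β γ (h6.trans h7)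
      rw [← hb, ← hc] at h8
      -- g = α*s + β*b + γ*c ≥ cost* = g + s, contradiction
      have : g + s ≤ α*s + β*b + γ*c := by omega
      omega
    · -- upper bound
      rintro k hk
      rw [Set.mem_setOf_eq, mem_closure_triple] at hk
      by_contra hgk
      push_neg at hgk
      obtain ⟨x, y, hcostb, hmodk⟩ := exists_rep a p q e ha hp hq he k
      rw [← hb, ← hc] at hcostb hmodk
      rw [← hs] at hmodk
      set w := x*b + y*c with hw
      have hwk : w ≤ k + s - 1 := by omega
      rcases Nat.lt_or_ge k w with hlt | hge
      · obtain ⟨d, hd⟩ := (Nat.modEq_iff_dvd' hlt.le).mp hmodk.symm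
        rcases Nat.eq_zero_or_pos d with rfl | hdpos
        · omega
        · have : s*1 ≤ s*d := Nat.mul_le_mul_left _ hdpos
          omega
      · obtain ⟨d, hd⟩ := (Nat.modEq_iff_dvd' hge).mp hmodk
        exact hk ⟨d, x, y, by have h9 : d*s = s*d := Nat.mul_comm d s; omega⟩
  · rw [hts1, hts2, hts3]
    have hqQ : (a:ℚ)*(p:ℚ) = 4*(q:ℚ)+2 := by exact_mod_cast hq
    have hgQ : (g:ℚ) = (((4*p+6)*b + q*c : ℕ) : ℚ) - (s:ℚ) := by
      rw [eq_sub_iff_add_eq]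
      exact_mod_cast hgs
    rw [hgQ, hs, hb, hc]
    push_cast
    linear_combination (-(((a:ℚ)*((p:ℚ)+4)*((p:ℚ)+2)+1))/4)*hqQ
end

section
/- Let a and n be integers with a ≥ 5, a ≡ 1 (mod 4), n ≥ 3, n ≡ 2 (mod 4), and a(n−2) ≥ 4n. Then the Frobenius number of the triple {S_{a,n}, S_{a,n+1}, S_{a,n+2}} equals (2n−2)·S_{a,n+1} + ((a(n−2)+4n−4)/4)·S_{a,n+2} − S_{a,n}. -/
set_option maxHeartbeats 1000000

private lemma pin_v (c v : ℤ) (hc : 0 < c) (hlo : -(2*c) < c*v) (hhi : c*v < c) : v = 0 ∨ v = -1 := by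
  rcases le_or_gt v (-2) with h|h
  · exfalso
    nlinarith [mul_nonneg hc.le (show (0:ℤ) ≤ -2-v by linarith)]
  · rcases le_or_gt 1 v with h'|h'
    · exfalso
      nlinarith [mul_nonneg hc.le (show (0:ℤ) ≤ v-1 by linarith)]
    · omega

private lemma inj_core (n m s : ℕ) (A : ℤ) (hn : n = 4*m+2) (hm : 1 ≤ m)
    (hA : A = 4*(n:ℤ)*((n:ℤ)+(s:ℤ))+1)
    (y₁ z₁ y₂ z₂ : ℕ)
    (h₁ : (y₁ < 4*n ∧ z₁ ≤ s) ∨ (y₁+1 < 2*n ∧ s < z₁ ∧ z₁ < s+2*n))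
    (h₂ : (y₂ < 4*n ∧ z₂ ≤ s) ∨ (y₂+1 < 2*n ∧ s < z₂ ∧ z₂ < s+2*n))
    (k : ℤ) (hk0 : 0 ≤ k)
    (hk : ((y₁:ℤ)*(2*(n:ℤ)-1) + 4*(n:ℤ)*(z₁:ℤ)) - ((y₂:ℤ)*(2*(n:ℤ)-1) + 4*(n:ℤ)*(z₂:ℤ)) = A * k) :
    y₁ = y₂ ∧ z₁ = z₂ := by
  have hn6 : (6:ℤ) ≤ (n:ℤ) := by exact_mod_cast (by omega : 6 ≤ n)
  have hs0 : (0:ℤ) ≤ (s:ℤ) := Int.natCast_nonneg s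
  have hApos : 0 < A := by nlinarith
  have hy1 : (y₁:ℤ) < 4*(n:ℤ) := by exact_mod_cast (by omega : y₁ < 4*n)
  have hy2 : (y₂:ℤ) < 4*(n:ℤ) := by exact_mod_cast (by omega : y₂ < 4*n)
  have hy1' : (0:ℤ) ≤ (y₁:ℤ) := Int.natCast_nonneg _
  have hy2' : (0:ℤ) ≤ (y₂:ℤ) := Int.natCast_nonneg _
  have hz2' : (0:ℤ) ≤ (z₂:ℤ) := Int.natCast_nonneg _
  have hf1 : (y₁:ℤ)*(2*(n:ℤ)-1) + 4*(n:ℤ)*(z₁:ℤ) < 3*A := by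
    rcases h₁ with ⟨hy, hz⟩ | ⟨hy, hz1, hz⟩
    · have hz' : (z₁:ℤ) ≤ (s:ℤ) := by exact_mod_cast hz
      have hy' : (y₁:ℤ) ≤ 4*(n:ℤ)-1 := by omega
      nlinarith
    · have hz' : (z₁:ℤ) ≤ (s:ℤ)+2*(n:ℤ)-1 := by
        have : (z₁:ℤ) < (s:ℤ)+2*(n:ℤ) := by exact_mod_cast hz
        omega
      have hy' : (y₁:ℤ) ≤ 2*(n:ℤ)-2 := by
        have : (y₁:ℤ)+1 < 2*(n:ℤ) := by exact_mod_cast hy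
        omega
      nlinarith
  have h2n1 : (0:ℤ) ≤ 2*(n:ℤ)-1 := by linarith
  have h4n : (0:ℤ) ≤ 4*(n:ℤ) := by linarith
  have hf2 : (0:ℤ) ≤ (y₂:ℤ)*(2*(n:ℤ)-1) + 4*(n:ℤ)*(z₂:ℤ) := by
    nlinarith [mul_nonneg hy2' h2n1, mul_nonneg h4n hz2']
  have hk2 : k ≤ 2 := by
    by_contra h
    push_neg at h
    have h3 : 3 ≤ k := h
    have : 3*A ≤ A*k := by nlinarith
    linarith
  have hv : ∃ v : ℤ, (y₁:ℤ) - (y₂:ℤ) = k*(2*(n:ℤ)-1) + 4*(n:ℤ)*v :=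
    ⟨(k*((n:ℤ)+(s:ℤ)) - ((z₁:ℤ)-(z₂:ℤ)))*(2*(n:ℤ)-1) - ((y₁:ℤ)-(y₂:ℤ))*((n:ℤ)-1),
      by linear_combination (2*(n:ℤ)-1)*hk + (2*(n:ℤ)-1)*k*hA⟩
  obtain ⟨v, hv⟩ := hv
  have hcpos : (0:ℤ) < 4*(n:ℤ) := by linarith
  interval_cases k
  · have hv01 : v = 0 ∨ v = -1 := by
      apply pin_v _ _ hcpos <;> linarith
    rcases hv01 with rfl | rfl
    · have hdy : (y₁:ℤ) - (y₂:ℤ) = 0 := by linarith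
      have h4 : (4*(n:ℤ))*((z₁:ℤ)-(z₂:ℤ)) = (4*(n:ℤ))*0 := by
        linear_combination hk - (2*(n:ℤ)-1)*hdy - (0:ℤ)*hA
      have hdz : (z₁:ℤ)-(z₂:ℤ) = 0 := mul_left_cancel₀ (by linarith) h4
      constructor <;> omega
    · exfalso
      have hdy : (y₁:ℤ) - (y₂:ℤ) = -(4*(n:ℤ)) := by linarith
      omega
  · have hv01 : v = 0 ∨ v = -1 := by
      apply pin_v _ _ hcpos <;> linarith
    rcases hv01 with rfl | rfl
    · have hdy : (y₁:ℤ) - (y₂:ℤ) = 2*(n:ℤ)-1 := by linarith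
      have h4 : (4*(n:ℤ))*((z₁:ℤ)-(z₂:ℤ)) = (4*(n:ℤ))*((s:ℤ)+1) := by
        linear_combination hk - (2*(n:ℤ)-1)*hdy + (1:ℤ)*hA
      have hdz : (z₁:ℤ)-(z₂:ℤ) = (s:ℤ)+1 := mul_left_cancel₀ (by linarith) h4
      exfalso; omega
    · have hdy : (y₁:ℤ) - (y₂:ℤ) = -(2*(n:ℤ)+1) := by linarith
      have h4 : (4*(n:ℤ))*((z₁:ℤ)-(z₂:ℤ)) = (4*(n:ℤ))*(2*(n:ℤ)+(s:ℤ)) := by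
        linear_combination hk - (2*(n:ℤ)-1)*hdy + (1:ℤ)*hA
      have hdz : (z₁:ℤ)-(z₂:ℤ) = 2*(n:ℤ)+(s:ℤ) := mul_left_cancel₀ (by linarith) h4
      exfalso; omega
  · have hv01 : v = 0 ∨ v = -1 := by
      apply pin_v _ _ hcpos <;> linarith
    rcases hv01 with rfl | rfl
    · have hdy : (y₁:ℤ) - (y₂:ℤ) = 4*(n:ℤ)-2 := by linarith
      have h4 : (4*(n:ℤ))*((z₁:ℤ)-(z₂:ℤ)) = (4*(n:ℤ))*(2*(s:ℤ)+2) := by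
        linear_combination hk - (2*(n:ℤ)-1)*hdy + (2:ℤ)*hA
      have hdz : (z₁:ℤ)-(z₂:ℤ) = 2*(s:ℤ)+2 := mul_left_cancel₀ (by linarith) h4
      exfalso; omega
    · have hdy : (y₁:ℤ) - (y₂:ℤ) = -2 := by linarith
      have h4 : (4*(n:ℤ))*((z₁:ℤ)-(z₂:ℤ)) = (4*(n:ℤ))*(2*(n:ℤ)+2*(s:ℤ)+1) := by
        linear_combination hk - (2*(n:ℤ)-1)*hdy + (2:ℤ)*hA
      have hdz : (z₁:ℤ)-(z₂:ℤ) = 2*(n:ℤ)+2*(s:ℤ)+1 := mul_left_cancel₀ (by linarith) h4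
      exfalso; omega

private lemma injVal (a n m s : ℕ) (A B C : ℕ) (hn : n = 4*m+2) (hm : 1 ≤ m)
    (hA : (A:ℤ) = 4*(n:ℤ)*((n:ℤ)+(s:ℤ))+1)
    (hAm : (A:ℤ) = 4*(a:ℤ)*(m:ℤ)*(n:ℤ)+1)
    (hB : (B:ℤ) = (A:ℤ) + 2*(a:ℤ)*(n:ℤ) - (a:ℤ))
    (hC : (C:ℤ) = (A:ℤ) + 4*(a:ℤ)*(n:ℤ))
    (y₁ z₁ y₂ z₂ : ℕ)
    (h₁ : (y₁ < 4*n ∧ z₁ ≤ s) ∨ (y₁+1 < 2*n ∧ s < z₁ ∧ z₁ < s+2*n))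
    (h₂ : (y₂ < 4*n ∧ z₂ ≤ s) ∨ (y₂+1 < 2*n ∧ s < z₂ ∧ z₂ < s+2*n))
    (hmod : (y₁*B + z₁*C) ≡ (y₂*B + z₂*C) [MOD A]) :
    y₁ = y₂ ∧ z₁ = z₂ := by
  obtain ⟨j, hj⟩ := hmod.dvd
  push_cast at hj
  have hF : (A:ℤ) ∣ (a:ℤ) * (((y₂:ℤ)*(2*(n:ℤ)-1) + 4*(n:ℤ)*(z₂:ℤ)) - ((y₁:ℤ)*(2*(n:ℤ)-1) + 4*(n:ℤ)*(z₁:ℤ))) := by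
    refine ⟨j - ((y₂:ℤ) - y₁) - ((z₂:ℤ) - z₁), ?_⟩
    rw [hB, hC] at hj
    linear_combination hj
  have hcop : IsCoprime ((A:ℤ)) ((a:ℤ)) :=
    ⟨1, -(4*(m:ℤ)*(n:ℤ)), by linear_combination hAm⟩
  obtain ⟨j', hj'⟩ := hcop.dvd_of_dvd_mul_left hF
  rcases le_or_gt 0 j' with hj0 | hj0
  · have := inj_core n m s A hn hm hA y₂ z₂ y₁ z₁ h₂ h₁ j' hj0 (by linear_combination hj')
    exact ⟨this.1.symm, this.2.symm⟩
  · exact inj_core n m s A hn hm hA y₁ z₁ y₂ z₂ h₁ h₂ (-j') (by omega) (by linear_combination -hj')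

private lemma surj (a n m s : ℕ) (A B C : ℕ) (hn : n = 4*m+2) (hm : 1 ≤ m)
    (hA : (A:ℤ) = 4*(n:ℤ)*((n:ℤ)+(s:ℤ))+1)
    (hAm : (A:ℤ) = 4*(a:ℤ)*(m:ℤ)*(n:ℤ)+1)
    (hB : (B:ℤ) = (A:ℤ) + 2*(a:ℤ)*(n:ℤ) - (a:ℤ))
    (hC : (C:ℤ) = (A:ℤ) + 4*(a:ℤ)*(n:ℤ)) (k : ℕ) :
    ∃ y z, ((y < 4*n ∧ z ≤ s) ∨ (y+1 < 2*n ∧ s < z ∧ z < s+2*n)) ∧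
      (y*B + z*C) ≡ k [MOD A] := by
  have hn6 : 6 ≤ n := by omega
  haveI : NeZero A := ⟨by
    intro h; rw [h] at hA; simp at hA
    nlinarith [hA, (by exact_mod_cast hn6 : (6:ℤ) ≤ (n:ℤ)), Int.natCast_nonneg s]⟩
  set R : Finset (ℕ×ℕ) :=
    ((Finset.range (4*n)) ×ˢ (Finset.range (s+1))) ∪
    ((Finset.range (2*n-1)) ×ˢ (Finset.Ico (s+1) (s+2*n))) with hR
  have hmem : ∀ p : ℕ×ℕ, p ∈ R ↔
      ((p.1 < 4*n ∧ p.2 ≤ s) ∨ (p.1+1 < 2*n ∧ s < p.2 ∧ p.2 < s+2*n)) := by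
    intro p
    simp only [hR, Finset.mem_union, Finset.mem_product, Finset.mem_range, Finset.mem_Ico]
    omega
  have hcard : R.card = A := by
    have hdisj : Disjoint ((Finset.range (4*n)) ×ˢ (Finset.range (s+1)))
        ((Finset.range (2*n-1)) ×ˢ (Finset.Ico (s+1) (s+2*n))) := by
      rw [Finset.disjoint_left]
      intro p hp1 hp2
      simp only [Finset.mem_product, Finset.mem_range, Finset.mem_Ico] at hp1 hp2
      omega
    rw [hR, Finset.card_union_of_disjoint hdisj, Finset.card_product, Finset.card_product,
      Finset.card_range, Finset.card_range, Finset.card_range, Nat.card_Ico]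
    have h1 : s + 2*n - (s+1) = 2*n-1 := by omega
    rw [h1]
    zify [show 1 ≤ 2*n by omega]
    rw [hA]; ring
  have hinj : Set.InjOn (fun p : ℕ×ℕ => ((p.1*B + p.2*C : ℕ) : ZMod A)) ↑R := by
    intro p hp q hq h
    have hp' := (hmem p).mp hp
    have hq' := (hmem q).mp hq
    have hmod : (p.1*B + p.2*C) ≡ (q.1*B + q.2*C) [MOD A] :=
      (ZMod.natCast_eq_natCast_iff _ _ _).mp h
    have key := injVal a n m s A B C hn hm hA hAm hB hC p.1 p.2 q.1 q.2 hp' hq' hmod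
    exact Prod.ext key.1 key.2
  have himg : R.image (fun p : ℕ×ℕ => ((p.1*B+p.2*C : ℕ) : ZMod A)) = Finset.univ :=
    Finset.eq_univ_of_card _ (by rw [Finset.card_image_of_injOn hinj, hcard, ZMod.card])
  have hk : ((k:ℕ) : ZMod A) ∈ R.image (fun p : ℕ×ℕ => ((p.1*B+p.2*C : ℕ) : ZMod A)) := by
    rw [himg]; exact Finset.mem_univ _
  obtain ⟨p, hp, hpk⟩ := Finset.mem_image.mp hk
  exact ⟨p.1, p.2, (hmem p).mp hp, (ZMod.natCast_eq_natCast_iff _ _ _).mp hpk⟩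

private lemma red (a n s : ℕ) (A B C : ℕ) (hn6 : 6 ≤ n) (ha : 5 ≤ a)
    (hA : (A:ℤ) = 4*(n:ℤ)*((n:ℤ)+(s:ℤ))+1)
    (hB : (B:ℤ) = (A:ℤ) + 2*(a:ℤ)*(n:ℤ) - (a:ℤ))
    (hC : (C:ℤ) = (A:ℤ) + 4*(a:ℤ)*(n:ℤ)) :
    ∀ N y z, y*B + z*C = N → ∃ u y' z',
      ((y' < 4*n ∧ z' ≤ s) ∨ (y'+1 < 2*n ∧ s < z' ∧ z' < s+2*n)) ∧
      u*A + (y'*B + z'*C) = N := by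
  have hApos : 0 < A := by
    have : (0:ℤ) < (A:ℤ) := by rw [hA]; positivity
    exact_mod_cast this
  intro N
  induction N using Nat.strong_induction_on with
  | _ N ih =>
    intro y z hyz
    by_cases hc1 : 4*n ≤ y
    · obtain ⟨y₂, rfl⟩ : ∃ y₂, y = y₂ + 4*n := ⟨y - 4*n, by omega⟩
      obtain ⟨z₂, hz₂⟩ : ∃ z₂, z₂ + 1 = z + 2*n := ⟨z + 2*n - 1, by omega⟩
      have key : (2*n+1)*A + (y₂*B + z₂*C) = N := by
        zify at hyz hz₂ ⊢
        rw [hB, hC] at hyz ⊢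
        linear_combination hyz + ((A:ℤ) + 4*(a:ℤ)*(n:ℤ))*hz₂
      have hlt : y₂*B + z₂*C < N := by
        have h1 : 0 < (2*n+1)*A := by positivity
        linarith
      obtain ⟨u, y', z', hb, he⟩ := ih _ hlt y₂ z₂ rfl
      refine ⟨u + (2*n+1), y', z', hb, ?_⟩
      have hx : (u+(2*n+1))*A = u*A + (2*n+1)*A := by ring
      linarith
    · by_cases hc2 : s + 2*n ≤ z
      · obtain ⟨z₂, rfl⟩ : ∃ z₂, z = z₂ + (s+2*n) := ⟨z - (s+2*n), by omega⟩
        obtain ⟨w, hw⟩ : ∃ w, w + 1 = s + a := ⟨s + a - 1, by omega⟩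
        have key : w*A + ((y+(2*n+1))*B + z₂*C) = N := by
          zify at hyz hw ⊢
          rw [hB, hC] at hyz ⊢
          linear_combination hyz + ((A:ℤ))*hw + (a:ℤ)*hA
        have hlt : (y+(2*n+1))*B + z₂*C < N := by
          have h1 : 0 < w*A := by
            have : 0 < w := by omega
            positivity
          linarith
        obtain ⟨u, y', z', hb, he⟩ := ih _ hlt (y+(2*n+1)) z₂ rfl
        refine ⟨u + w, y', z', hb, ?_⟩
        have hx : (u+w)*A = u*A + w*A := by ring
        linarith
      · by_cases hc3 : z ≤ s
        · exact ⟨0, y, z, Or.inl ⟨by omega, hc3⟩, by simpa using hyz⟩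
        · by_cases hc4 : y + 1 < 2*n
          · exact ⟨0, y, z, Or.inr ⟨hc4, by omega, by omega⟩, by simpa using hyz⟩
          · obtain ⟨y₂, hy₂⟩ : ∃ y₂, y₂ + 2*n = y + 1 := ⟨y + 1 - 2*n, by omega⟩
            obtain ⟨z₂, rfl⟩ : ∃ z₂, z = z₂ + (s+1) := ⟨z - (s+1), by omega⟩
            have key : (s+a+2*n)*A + (y₂*B + z₂*C) = N := by
              zify at hyz hy₂ ⊢
              rw [hB, hC] at hyz ⊢
              linear_combination hyz + ((A:ℤ) + 2*(a:ℤ)*(n:ℤ) - (a:ℤ))*hy₂ + (a:ℤ)*hA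
            have hlt : y₂*B + z₂*C < N := by
              have h1 : 0 < (s+a+2*n)*A := by positivity
              linarith
            obtain ⟨u, y', z', hb, he⟩ := ih _ hlt y₂ z₂ rfl
            refine ⟨u + (s+a+2*n), y', z', hb, ?_⟩
            have hx : (u+(s+a+2*n))*A = u*A + (s+a+2*n)*A := by ring
            linarith

theorem frobenius_twoStepStar_one_two (a n : ℕ) (ha : 5 ≤ a) (ha4 : a % 4 = 1) (hn : 3 ≤ n) (hn4 : n % 4 = 2) (hbig : 4 * n ≤ a * (n - 2)) :
    ∃ g : ℕ,
      FrobeniusNumber g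
        {twoStepStar a n, twoStepStar a (n + 1), twoStepStar a (n + 2)} ∧
      (g : ℚ) = (2 * (n : ℚ) - 2) * twoStepStar a (n + 1) + (((a : ℚ) * ((n : ℚ) - 2) + 4 * (n : ℚ) - 4) / 4) * twoStepStar a (n + 2) - twoStepStar a n := by
  obtain ⟨m, hm⟩ : ∃ m, n = 4*m+2 := ⟨n/4, by omega⟩
  subst hm
  set n := 4*m+2 with hndef
  have hm1 : 1 ≤ m := by omega
  have hn6 : 6 ≤ n := by omega
  have hble : n ≤ a*m := by
    have h2 : n - 2 = 4*m := by omega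
    rw [h2] at hbig
    have h3 : a*(4*m) = 4*(a*m) := by ring
    omega
  obtain ⟨s, hs⟩ : ∃ s, a*m = n + s := ⟨a*m - n, by omega⟩
  have hsZ : (a:ℤ)*(m:ℤ) = (n:ℤ)+(s:ℤ) := by exact_mod_cast hs
  set A := twoStepStar a n with hAdef
  set B := twoStepStar a (n+1) with hBdef
  set C := twoStepStar a (n+2) with hCdef
  have hAm : (A:ℤ) = 4*(a:ℤ)*(m:ℤ)*(n:ℤ)+1 := by
    rw [hAdef]; unfold twoStepStar
    rw [show n - 2 = 4*m by omega]
    push_cast [hndef]; ring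
  have hA : (A:ℤ) = 4*(n:ℤ)*((n:ℤ)+(s:ℤ))+1 := by
    rw [hAm]; linear_combination 4*(n:ℤ)*hsZ
  have hB : (B:ℤ) = (A:ℤ) + 2*(a:ℤ)*(n:ℤ) - (a:ℤ) := by
    rw [hBdef, hAm]; unfold twoStepStar
    rw [show n + 1 - 2 = 4*m+1 by omega]
    push_cast [hndef]; ring
  have hC : (C:ℤ) = (A:ℤ) + 4*(a:ℤ)*(n:ℤ) := by
    rw [hCdef, hAm]; unfold twoStepStar
    rw [show n + 2 - 2 = 4*m+2 by omega]
    push_cast [hndef]; ring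
  have hApos : 0 < A := by
    have : (0:ℤ) < (A:ℤ) := by rw [hA]; positivity
    exact_mod_cast this
  have hCA : A ≤ C := by
    have h1 : (0:ℤ) ≤ 4*(a:ℤ)*(n:ℤ) := by positivity
    have : (A:ℤ) ≤ (C:ℤ) := by rw [hC]; linarith
    exact_mod_cast this
  -- the maximal Apéry element (y₀, z₀) = (2n-2, s+2n-1)
  set y₀ := 8*m+2 with hy₀def
  set z₀ := s+8*m+3 with hz₀def
  set W := y₀*B + z₀*C with hWdef
  have hAW : A ≤ W := by
    calc A ≤ C := hCA
    _ ≤ z₀*C := Nat.le_mul_of_pos_left C (by omega)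
    _ ≤ W := Nat.le_add_left _ _
  have hband₀ : ((y₀ < 4*n ∧ z₀ ≤ s) ∨ (y₀+1 < 2*n ∧ s < z₀ ∧ z₀ < s+2*n)) := by
    right; omega
  -- the key inequality (2n+1)·B ≤ (2n-1)·C
  have hKeyZ : ((8*m+3):ℤ)*(C:ℤ) - ((8*m+5):ℤ)*(B:ℤ) = 4*(a:ℤ)*(n:ℤ)*(n:ℤ) - 4*(a:ℤ)*(n:ℤ) + (a:ℤ) - 2*(A:ℤ) := by
    rw [hB, hC]; push_cast [hndef]; ring
  have hnZ : (n:ℤ) = 4*(m:ℤ)+2 := by push_cast [hndef]; ring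
  have hKey : ((8*m+5):ℤ)*(B:ℤ) ≤ ((8*m+3):ℤ)*(C:ℤ) := by
    have haZ : (5:ℤ) ≤ (a:ℤ) := by exact_mod_cast ha
    have hmZ : (1:ℤ) ≤ (m:ℤ) := by exact_mod_cast hm1
    nlinarith [hKeyZ, hA, hsZ, hnZ]
  -- bound: every band element is at most W
  have hBND : ∀ y z : ℕ, ((y < 4*n ∧ z ≤ s) ∨ (y+1 < 2*n ∧ s < z ∧ z < s+2*n)) →
      y*B + z*C ≤ W := by
    intro y z hb
    have hBpos : (0:ℤ) ≤ (B:ℤ) := Int.natCast_nonneg _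
    have hCpos : (0:ℤ) ≤ (C:ℤ) := Int.natCast_nonneg _
    rcases hb with ⟨hy, hz⟩ | ⟨hy, hz1, hz⟩
    · have hyZ : (y:ℤ) ≤ 16*(m:ℤ)+7 := by
        have : (y:ℤ) < 4*(n:ℤ) := by exact_mod_cast hy
        omega
      have hzZ : (z:ℤ) ≤ (s:ℤ) := by exact_mod_cast hz
      have h1 : (y:ℤ)*(B:ℤ) ≤ (16*(m:ℤ)+7)*(B:ℤ) := by
        exact mul_le_mul_of_nonneg_right hyZ hBpos
      have h2 : (z:ℤ)*(C:ℤ) ≤ (s:ℤ)*(C:ℤ) := mul_le_mul_of_nonneg_right hzZ hCpos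
      have : (y:ℤ)*(B:ℤ) + (z:ℤ)*(C:ℤ) ≤ (W:ℤ) := by
        have hWZ : (W:ℤ) = ((8*m+2 : ℕ):ℤ)*(B:ℤ) + ((s+8*m+3 : ℕ):ℤ)*(C:ℤ) := by
          rw [hWdef, hy₀def, hz₀def]; push_cast; ring
        push_cast at hWZ
        linarith [hKey]
      exact_mod_cast this
    · have hyZ : y ≤ y₀ := by omega
      have hzZ : z ≤ z₀ := by omega
      exact Nat.add_le_add (Nat.mul_le_mul_right B hyZ) (Nat.mul_le_mul_right C hzZ)
  -- minimality: anything congruent to W is at least W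
  have hMIN : ∀ y z : ℕ, (y*B + z*C) ≡ W [MOD A] → W ≤ y*B + z*C := by
    intro y z hmod
    obtain ⟨u, y', z', hb, he⟩ := red a n s A B C hn6 ha hA hB hC (y*B+z*C) y z rfl
    have hle' : y'*B + z'*C ≤ y*B + z*C := he ▸ Nat.le_add_left _ _
    have h1' : A ∣ (y*B + z*C) - (y'*B + z'*C) := by
      refine ⟨u, ?_⟩
      have h2 : (y*B + z*C) - (y'*B + z'*C) = u*A := by omega
      rw [h2]; ring
    have h1 : (y'*B + z'*C) ≡ (y*B + z*C) [MOD A] :=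
      (Nat.modEq_iff_dvd' hle').mpr h1'
    have h2 : (y'*B + z'*C) ≡ W [MOD A] := h1.trans hmod
    have := injVal a n m s A B C rfl hm1 hA hAm hB hC y' z' y₀ z₀ hb hband₀ h2
    obtain ⟨hy', hz'⟩ := this
    subst hy' hz'
    omega
  refine ⟨W - A, ⟨?_, ?_⟩, ?_⟩
  · -- W - A is not representable
    intro hgmem
    rw [show ({A, B, C} : Set ℕ) = {A} ∪ {B, C} from Set.insert_eq _ _,
      AddSubmonoid.closure_union] at hgmem
    obtain ⟨u, hu, v, hv, huv⟩ := AddSubmonoid.mem_sup.mp hgmem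
    obtain ⟨x, hx⟩ := AddSubmonoid.mem_closure_singleton.mp hu
    obtain ⟨y, z, hyz⟩ := (AddSubmonoid.mem_closure_pair B C v).mp hv
    simp only [smul_eq_mul] at hx hyz
    have hle : y*B + z*C ≤ W := by omega
    have hdvd : A ∣ W - (y*B + z*C) := by
      refine ⟨x+1, ?_⟩
      have h2 : W - (y*B + z*C) = x*A + A := by omega
      rw [h2]; ring
    have hmod : (y*B + z*C) ≡ W [MOD A] := (Nat.modEq_iff_dvd' hle).mpr hdvd
    have := hMIN y z hmod
    omega
  · -- everything above W - A is representable
    intro k hk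
    simp only [Set.mem_setOf_eq] at hk
    by_contra hgk
    push_neg at hgk
    apply hk
    obtain ⟨y, z, hb, hmodk⟩ := surj a n m s A B C rfl hm1 hA hAm hB hC k
    have hle : y*B + z*C ≤ W := hBND y z hb
    have hwk : y*B + z*C ≤ k := by
      by_contra hcon
      push_neg at hcon
      have hd : A ∣ (y*B+z*C) - k := (Nat.modEq_iff_dvd' hcon.le).mp hmodk.symm
      have := Nat.le_of_dvd (by omega) hd
      omega
    obtain ⟨d, hd⟩ : ∃ d, k - (y*B+z*C) = A*d := (Nat.modEq_iff_dvd' hwk).mp hmodk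
    have hkeq : k = y*B + z*C + A*d := by omega
    have hAmem : A ∈ AddSubmonoid.closure ({A, B, C} : Set ℕ) :=
      AddSubmonoid.subset_closure (by simp)
    have hBmem : B ∈ AddSubmonoid.closure ({A, B, C} : Set ℕ) :=
      AddSubmonoid.subset_closure (by simp)
    have hCmem : C ∈ AddSubmonoid.closure ({A, B, C} : Set ℕ) :=
      AddSubmonoid.subset_closure (by simp)
    have : y*B + z*C + A*d ∈ AddSubmonoid.closure ({A, B, C} : Set ℕ) := by
      refine AddSubmonoid.add_mem _ (AddSubmonoid.add_mem _ ?_ ?_) ?_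
      · simpa [smul_eq_mul] using AddSubmonoid.nsmul_mem _ hBmem y
      · simpa [smul_eq_mul] using AddSubmonoid.nsmul_mem _ hCmem z
      · simpa [smul_eq_mul, mul_comm] using AddSubmonoid.nsmul_mem _ hAmem d
    rwa [hkeq]
  · -- the closed form over ℚ
    have hgW : (W - A) + A = W := by omega
    have hcast : ((W - A : ℕ) : ℚ) = (W:ℚ) - (A:ℚ) := by
      push_cast [Nat.cast_sub hAW]; ring
    rw [hcast]
    have hWQ : (W:ℚ) = ((8*m+2 : ℕ):ℚ)*(B:ℚ) + ((s+8*m+3 : ℕ):ℚ)*(C:ℚ) := by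
      rw [hWdef, hy₀def, hz₀def]; push_cast; ring
    have hsQ : (a:ℚ)*(m:ℚ) = (n:ℚ)+(s:ℚ) := by exact_mod_cast hs
    have hnQ : (n:ℚ) = 4*(m:ℚ)+2 := by push_cast [hndef]; ring
    rw [hWQ]
    push_cast
    field_simp
    linear_combination (-4*(C:ℚ))*hsQ + (-4*(C:ℚ))*hnQ + (-8*(B:ℚ)-4*(C:ℚ)-(C:ℚ)*(a:ℚ))*hnQ
end

section
/- Let a and n be integers with a ≥ 5, a ≡ 1 (mod 4), n ≥ 3, n ≡ 3 (mod 4), and a(n−2) ≥ 6n−1. Then the Frobenius number of the triple {S_{a,n}, S_{a,n+1}, S_{a,n+2}} equals (3n−2)·S_{a,n+1} + ((a(n−2)+2n−3)/4)·S_{a,n+2} − S_{a,n}. -/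
lemma lat_decomp (k A m t c dx dy : ℤ) (hA0 : A ≠ 0)
    (hK1 : (4*k+12)*(m+1) - (2*k+5)*(k+4) = A)
    (hK2 : m = t + 2*k + 4)
    (hc : dx*(2*k+5) + (4*k+12)*dy = c*A) :
    ∃ α β : ℤ, c = α + β ∧ dx = α*(3*k+8) - β*(k+4) ∧ dy = α*t + β*(m+1) := by
  obtain ⟨X, hX⟩ : ∃ X : ℤ, X = dx*(m+1) + dy*(k+4) := ⟨_, rfl⟩
  obtain ⟨α, hα⟩ : ∃ α : ℤ, α = (k+3)*(dx + c*(k+4)) - (2*k+7)*(c*(m+1) - dy) := ⟨_, rfl⟩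
  have e1 : (4*k+12)*X = (dx + c*(k+4))*A := by
    linear_combination (k+4)*hc + dx*hK1 + (4*k+12)*hX
  have e2 : (2*k+5)*X = (c*(m+1) - dy)*A := by
    linear_combination (m+1)*hc - dy*hK1 + (2*k+5)*hX
  have eX : X = α*A := by linear_combination (k+3)*e1 - (2*k+7)*e2 - A*hα
  have hdx : dx = (4*k+12)*α - (k+4)*c := by
    have h : dx*A = ((4*k+12)*α - (k+4)*c)*A := by
      linear_combination (4*k+12)*eX - e1
    exact mul_right_cancel₀ hA0 h
  have hdy : dy = (m+1)*c - (2*k+5)*α := by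
    have h : dy*A = ((m+1)*c - (2*k+5)*α)*A := by
      linear_combination e2 - (2*k+5)*eX
    exact mul_right_cancel₀ hA0 h
  exact ⟨α, c - α, by ring, by rw [hdx]; ring, by rw [hdy, hK2]; ring⟩

lemma inj_core_s8 (k t m α β dx dy : ℤ) (hk : 0 ≤ k) (ht : 1 ≤ t) (hm : m = t + 2*k + 4)
    (hdx : dx = α*(3*k+8) - β*(k+4)) (hdy : dy = α*t + β*(m+1))
    (bx1 : dx ≤ 4*k+11) (bx2 : -(4*k+11) ≤ dx) (by1 : dy ≤ m) (by2 : -m ≤ dy)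
    (s1 : 3*k+8 ≤ dx → dy ≤ t-1) (s2 : dx ≤ -(3*k+8) → -(t-1) ≤ dy) :
    dx = 0 ∧ dy = 0 := by
  have hm1 : 2*k + 5 ≤ m := by omega
  rcases lt_trichotomy α 0 with hα | hα | hα
  · have hα1 : α ≤ -1 := by omega
    rcases lt_trichotomy β 0 with hβ | hβ | hβ
    · exfalso
      have h1 : α*t ≤ -t := by nlinarith
      have h2 : β*(m+1) ≤ -(m+1) := by nlinarith
      omega
    · subst hβ
      have h2 : α = -1 ∨ α ≤ -2 := by omega
      rcases h2 with rfl | h2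
      · exfalso
        have hs := s2 (by omega)
        omega
      · exfalso
        have : α*(3*k+8) ≤ -2*(3*k+8) := by nlinarith
        omega
    · exfalso
      have hβ1 : 1 ≤ β := by omega
      have h1 : α*(3*k+8) ≤ -(3*k+8) := by nlinarith
      have h2 : (k+4) ≤ β*(k+4) := by nlinarith
      omega
  · subst hα
    rcases lt_trichotomy β 0 with hβ | hβ | hβ
    · exfalso
      have : β*(m+1) ≤ -(m+1) := by nlinarith
      omega
    · subst hβ; omega
    · exfalso
      have : (m+1) ≤ β*(m+1) := by nlinarith
      omega
  · have hα1 : 1 ≤ α := by omega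
    rcases lt_trichotomy β 0 with hβ | hβ | hβ
    · exfalso
      have hβ1 : β ≤ -1 := by omega
      have h1 : (3*k+8) ≤ α*(3*k+8) := by nlinarith
      have h2 : β*(k+4) ≤ -(k+4) := by nlinarith
      omega
    · subst hβ
      have h2 : α = 1 ∨ 2 ≤ α := by omega
      rcases h2 with rfl | h2
      · exfalso
        have hs := s1 (by omega)
        omega
      · exfalso
        have : 2*(3*k+8) ≤ α*(3*k+8) := by nlinarith
        omega
    · exfalso
      have h1 : t ≤ α*t := by nlinarith
      have h2 : (m+1) ≤ β*(m+1) := by nlinarith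
      omega

lemma min_core (k t m B C α β dx dy : ℤ) (hk : 0 ≤ k) (ht : 1 ≤ t) (hm : m = t + 2*k + 4)
    (hB : 0 ≤ B) (hC : 0 ≤ C)
    (hk2 : (k+4)*B ≤ (m+1)*C) (hk12 : (2*k+5)*C ≤ (4*k+12)*B)
    (hdx : dx = α*(3*k+8) - β*(k+4)) (hdy : dy = α*t + β*(m+1))
    (bx : -(3*k+7) ≤ dx) (by2 : -m ≤ dy) :
    0 ≤ dx*B + dy*C := by
  have key : dx*B + dy*C = α*((3*k+8)*B + t*C) + β*((m+1)*C - (k+4)*B) := by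
    rw [hdx, hdy]; ring
  have hk1pos : 0 ≤ (3*k+8)*B + t*C := by positivity
  have hk2pos : 0 ≤ (m+1)*C - (k+4)*B := by omega
  have hαpos : 0 ≤ α := by
    by_contra h
    push_neg at h
    have hα1 : α ≤ -1 := by omega
    have h1 : α*(3*k+8) ≤ -(3*k+8) := by nlinarith
    have hβ : β ≤ -1 := by nlinarith
    have h2 : α*t ≤ -t := by nlinarith
    have h3 : β*(m+1) ≤ -(m+1) := by nlinarith
    omega
  rcases le_or_gt 0 β with hβ | hβ
  · nlinarith [mul_nonneg hαpos hk1pos, mul_nonneg hβ hk2pos]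
  · have hβ1 : β ≤ -1 := by omega
    have hαβ : -β ≤ α := by
      by_contra h
      push_neg at h
      have h' : α ≤ -β - 1 := by omega
      have h1 : α*t ≤ (-β-1)*t := by nlinarith
      have h2 : (-β)*(m+1) - m ≤ α*t := by nlinarith
      nlinarith
    have hdiff : 0 ≤ ((3*k+8)*B + t*C) - ((m+1)*C - (k+4)*B) := by
      have : ((3*k+8)*B + t*C) - ((m+1)*C - (k+4)*B) = (4*k+12)*B - (2*k+5)*C := by
        rw [hm]; ring
      omega
    nlinarith [mul_nonneg (by omega : (0:ℤ) ≤ α + β) hk1pos,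
      mul_nonneg (by omega : (0:ℤ) ≤ -β) hdiff]

lemma mem_closure3 (A B C i j l : ℕ) :
    i*A + j*B + l*C ∈ AddSubmonoid.closure ({A, B, C} : Set ℕ) := by
  have hA : A ∈ AddSubmonoid.closure ({A, B, C} : Set ℕ) :=
    AddSubmonoid.subset_closure (by simp)
  have hB : B ∈ AddSubmonoid.closure ({A, B, C} : Set ℕ) :=
    AddSubmonoid.subset_closure (by simp)
  have hC : C ∈ AddSubmonoid.closure ({A, B, C} : Set ℕ) :=
    AddSubmonoid.subset_closure (by simp)
  have h1 := AddSubmonoid.nsmul_mem _ hA i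
  have h2 := AddSubmonoid.nsmul_mem _ hB j
  have h3 := AddSubmonoid.nsmul_mem _ hC l
  simp only [smul_eq_mul] at h1 h2 h3
  exact add_mem (add_mem h1 h2) h3

lemma closure3_repr {A B C x : ℕ} (hx : x ∈ AddSubmonoid.closure ({A, B, C} : Set ℕ)) :
    ∃ i j l : ℕ, x = i*A + j*B + l*C := by
  induction hx using AddSubmonoid.closure_induction with
  | mem y hy =>
    rcases hy with rfl | rfl | rfl
    · exact ⟨1, 0, 0, by ring⟩
    · exact ⟨0, 1, 0, by ring⟩
    · exact ⟨0, 0, 1, by ring⟩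
  | zero => exact ⟨0, 0, 0, by ring⟩
  | add y z _ _ hy hz =>
    obtain ⟨i1, j1, l1, rfl⟩ := hy
    obtain ⟨i2, j2, l2, rfl⟩ := hz
    exact ⟨i1+i2, j1+j2, l1+l2, by ring⟩

theorem frobenius_twoStepStar_one_three (a n : ℕ) (ha : 5 ≤ a) (ha4 : a % 4 = 1) (hn : 3 ≤ n) (hn4 : n % 4 = 3) (hbig : 6 * n - 1 ≤ a * (n - 2)) :
    ∃ g : ℕ,
      FrobeniusNumber g
        {twoStepStar a n, twoStepStar a (n + 1), twoStepStar a (n + 2)} ∧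
      (g : ℚ) = (3 * (n : ℚ) - 2) * twoStepStar a (n + 1) + (((a : ℚ) * ((n : ℚ) - 2) + 2 * (n : ℚ) - 3) / 4) * twoStepStar a (n + 2) - twoStepStar a n := by
  obtain ⟨k, rfl⟩ : ∃ k, n = k + 3 := ⟨n - 3, by omega⟩
  obtain ⟨A, hA⟩ : ∃ A, A = a*(k+3)*(k+1)+1 := ⟨_, rfl⟩
  obtain ⟨B, hB⟩ : ∃ B, B = a*(k+4)*(k+2)+1 := ⟨_, rfl⟩
  obtain ⟨C, hC⟩ : ∃ C, C = a*(k+5)*(k+3)+1 := ⟨_, rfl⟩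
  have hg1 : twoStepStar a (k+3) = A := by
    have e : k+3-2 = k+1 := by omega
    rw [twoStepStar, e, hA]
  have hg2 : twoStepStar a (k+3+1) = B := by
    have e : k+3+1-2 = k+2 := by omega
    rw [twoStepStar, e, hB]
  have hg3 : twoStepStar a (k+3+2) = C := by
    have e : k+3+2-2 = k+3 := by omega
    rw [twoStepStar, e, hC]
  rw [hg1, hg2, hg3]
  have hApos : 0 < A := by omega
  have hBpos : 0 < B := by omega
  have hCpos : 0 < C := by omega
  have hk4 : k % 4 = 0 := by omega
  obtain ⟨u, hu⟩ : ∃ u, a*(k+1) = u := ⟨_, rfl⟩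
  have hu4 : u % 4 = 1 := by
    have h2 : (k+1) % 4 = 1 := by omega
    rw [← hu, Nat.mul_mod, ha4, h2]
  have hbig' : 6*k + 17 ≤ u := by
    have e : k+3-2 = k+1 := by omega
    rw [e, hu] at hbig
    omega
  obtain ⟨t, ht⟩ : ∃ t, u = 4*t + 6*k + 13 := ⟨(u - (6*k+13))/4, by omega⟩
  obtain ⟨m, hm⟩ : ∃ m, m = t + 2*k + 4 := ⟨_, rfl⟩
  have ht1 : 1 ≤ t := by omega
  have hm4 : 4*m = a*(k+1) + 2*k + 3 := by rw [hu]; omega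
  have htn : a*(k+1) = 4*t + 6*k + 13 := by rw [hu]; omega
  -- integer cast facts
  have hAZ : (A:ℤ) = (a:ℤ)*((k:ℤ)+3)*((k:ℤ)+1)+1 := by rw [hA]; push_cast; ring
  have hBZ : (B:ℤ) = (A:ℤ) + (a:ℤ)*(2*(k:ℤ)+5) := by rw [hA, hB]; push_cast; ring
  have hCZ : (C:ℤ) = (A:ℤ) + (a:ℤ)*(4*(k:ℤ)+12) := by rw [hA, hC]; push_cast; ring
  have hm4Z : (4:ℤ)*(m:ℤ) = (a:ℤ)*((k:ℤ)+1) + 2*(k:ℤ) + 3 := by exact_mod_cast hm4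
  have htZ : (a:ℤ)*((k:ℤ)+1) = 4*(t:ℤ) + 6*(k:ℤ) + 13 := by exact_mod_cast htn
  have hmZ : (m:ℤ) = (t:ℤ) + 2*(k:ℤ) + 4 := by exact_mod_cast hm
  have hkZ : (0:ℤ) ≤ (k:ℤ) := Int.natCast_nonneg k
  have htZ1 : (1:ℤ) ≤ (t:ℤ) := by exact_mod_cast ht1
  have hK1Z : (4*(k:ℤ)+12)*((m:ℤ)+1) - (2*(k:ℤ)+5)*((k:ℤ)+4) = (A:ℤ) := by
    linear_combination ((k:ℤ)+3)*hm4Z - hAZ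
  have hA0Z : (A:ℤ) ≠ 0 := by positivity
  have hcop : IsCoprime ((A:ℤ)) ((a:ℤ)) :=
    ⟨1, -(((k:ℤ)+3)*((k:ℤ)+1)), by rw [hAZ]; ring⟩
  -- the key congruence-to-lattice reduction
  have reduce : ∀ x1 y1 x2 y2 : ℕ,
      (x1*B + y1*C) % A = (x2*B + y2*C) % A →
      ∃ α β : ℤ, ((x2:ℤ) - x1) = α*(3*(k:ℤ)+8) - β*((k:ℤ)+4) ∧
        ((y2:ℤ) - y1) = α*(t:ℤ) + β*((m:ℤ)+1) := by
    intro x1 y1 x2 y2 heq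
    have hmod : (x1*B + y1*C) ≡ (x2*B + y2*C) [MOD A] := heq
    have hdvd := hmod.dvd
    push_cast at hdvd
    have hdvd2 : (A:ℤ) ∣ (a:ℤ) * (((x2:ℤ)-x1)*(2*(k:ℤ)+5) + (4*(k:ℤ)+12)*((y2:ℤ)-y1)) := by
      obtain ⟨e, he⟩ := hdvd
      refine ⟨e - (((x2:ℤ)-x1) + ((y2:ℤ)-y1)), ?_⟩
      linear_combination he - ((x2:ℤ)-x1)*hBZ - ((y2:ℤ)-y1)*hCZ
    obtain ⟨c, hc⟩ := hcop.dvd_of_dvd_mul_left hdvd2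
    obtain ⟨α, β, _, h1, h2⟩ := lat_decomp (k:ℤ) (A:ℤ) (m:ℤ) (t:ℤ) c
      ((x2:ℤ)-x1) ((y2:ℤ)-y1) hA0Z hK1Z hmZ (by linear_combination hc)
    exact ⟨α, β, h1, h2⟩
  -- the Apery candidate set
  obtain ⟨P, hP⟩ : ∃ P : Finset (ℕ×ℕ),
      P = (Finset.range (3*k+8) ×ˢ Finset.range (m+1)) ∪
          ((Finset.Ico (3*k+8) (4*k+12)) ×ˢ Finset.range t) := ⟨_, rfl⟩
  have hPmem : ∀ p : ℕ×ℕ, p ∈ P ↔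
      (p.1 < 3*k+8 ∧ p.2 < m+1) ∨ (3*k+8 ≤ p.1 ∧ p.1 < 4*k+12 ∧ p.2 < t) := by
    intro p
    simp only [hP, Finset.mem_union, Finset.mem_product, Finset.mem_range, Finset.mem_Ico]
    tauto
  have hPcard : P.card = A := by
    have hIco : (Finset.Ico (3*k+8) (4*k+12)).card = k+4 := by
      rw [Nat.card_Ico]; omega
    have hdisj : Disjoint (Finset.range (3*k+8) ×ˢ Finset.range (m+1))
        ((Finset.Ico (3*k+8) (4*k+12)) ×ˢ Finset.range t) := by
      rw [Finset.disjoint_left]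
      rintro ⟨x, y⟩ hx hy
      simp only [Finset.mem_product, Finset.mem_range, Finset.mem_Ico] at hx hy
      omega
    rw [hP, Finset.card_union_of_disjoint hdisj, Finset.card_product, Finset.card_product,
      Finset.card_range, Finset.card_range, Finset.card_range, hIco]
    have : ((3*k+8)*(m+1) + (k+4)*t : ℤ) = (A:ℤ) := by
      push_cast
      linear_combination -hAZ - ((k:ℤ)+3)*htZ + (3*(k:ℤ)+8)*hmZ
    exact_mod_cast this
  -- injectivity
  have hinj : Set.InjOn (fun p : ℕ×ℕ => (p.1*B + p.2*C) % A) P := by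
    rintro ⟨x1, y1⟩ h1 ⟨x2, y2⟩ h2 heq
    simp only [Finset.mem_coe, hPmem] at h1 h2
    obtain ⟨α, β, hdx, hdy⟩ := reduce x1 y1 x2 y2 heq
    have hb := inj_core_s8 (k:ℤ) (t:ℤ) (m:ℤ) α β ((x2:ℤ)-x1) ((y2:ℤ)-y1) hkZ htZ1
      hmZ hdx hdy (by omega) (by omega) (by omega) (by omega)
      (by intro hge; omega) (by intro hge; omega)
    have hxy : x1 = x2 ∧ y1 = y2 := by omega
    rw [hxy.1, hxy.2]
  -- coverage
  have hcover : ∀ r, r < A → ∃ p : ℕ×ℕ, p ∈ P ∧ (p.1*B + p.2*C) % A = r := by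
    intro r hr
    have himg : P.image (fun p : ℕ×ℕ => (p.1*B + p.2*C) % A) = Finset.range A := by
      apply Finset.eq_of_subset_of_card_le
      · intro x hx
        simp only [Finset.mem_image] at hx
        obtain ⟨p, _, rfl⟩ := hx
        exact Finset.mem_range.2 (Nat.mod_lt _ hApos)
      · rw [Finset.card_range, Finset.card_image_of_injOn hinj, hPcard]
    have : r ∈ P.image (fun p : ℕ×ℕ => (p.1*B + p.2*C) % A) := by
      rw [himg]; exact Finset.mem_range.2 hr
    simpa using this
  -- max of Apery set
  have hBleC : B ≤ C := by
    rw [hB, hC]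
    have : a*(k+4)*(k+2) ≤ a*(k+5)*(k+3) := by
      apply Nat.mul_le_mul
      apply Nat.mul_le_mul_left
      all_goals omega
    omega
  have hmax : ∀ p : ℕ×ℕ, p ∈ P → p.1*B + p.2*C ≤ (3*k+7)*B + m*C := by
    rintro ⟨x, y⟩ hp
    simp only [hPmem] at hp
    show x*B + y*C ≤ (3*k+7)*B + m*C
    rcases hp with ⟨hx, hy⟩ | ⟨hx1, hx2, hy⟩
    · have e1 : x*B ≤ (3*k+7)*B := Nat.mul_le_mul_right _ (by omega)
      have e2 : y*C ≤ m*C := Nat.mul_le_mul_right _ (by omega)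
      omega
    · have e1 : x*B ≤ (4*k+11)*B := Nat.mul_le_mul_right _ (by omega)
      have e3 : (k+4)*B ≤ (2*k+5)*C := Nat.mul_le_mul (by omega) hBleC
      have e4 : (y + (2*k+5))*C ≤ m*C := Nat.mul_le_mul_right _ (by omega)
      have e5 : (4*k+11)*B = (3*k+7)*B + (k+4)*B := by ring
      have e6 : (y + (2*k+5))*C = y*C + (2*k+5)*C := by ring
      omega
  -- minimality at the top class
  have hk12 : (4*k+12)*B = (2*k+5)*C + (2*k+7)*A := by
    rw [hA, hB, hC]; ring
  have hk12Z : (2*(k:ℤ)+5)*(C:ℤ) ≤ (4*(k:ℤ)+12)*(B:ℤ) := by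
    have h' : (2*k+5)*C ≤ (4*k+12)*B := by
      have hAnn : 0 ≤ (2*k+7)*A := Nat.zero_le _
      omega
    exact_mod_cast h'
  have hkBCZ : ((k:ℤ)+4)*(B:ℤ) ≤ ((m:ℤ)+1)*(C:ℤ) := by
    have h' : (k+4)*B ≤ (m+1)*C := Nat.mul_le_mul (by omega) hBleC
    exact_mod_cast h'
  have hmin : ∀ x y : ℕ, (x*B + y*C) % A = ((3*k+7)*B + m*C) % A →
      (3*k+7)*B + m*C ≤ x*B + y*C := by
    intro x y heq
    obtain ⟨α, β, hdx, hdy⟩ := reduce (3*k+7) m x y heq.symm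
    push_cast at hdx hdy
    have h0 := min_core (k:ℤ) (t:ℤ) (m:ℤ) (B:ℤ) (C:ℤ) α β
      ((x:ℤ) - (3*(k:ℤ)+7)) ((y:ℤ) - (m:ℤ)) hkZ htZ1 hmZ
      (by positivity) (by positivity) hkBCZ hk12Z
      (by linarith [hdx]) (by linarith [hdy])
      (by linarith [Int.natCast_nonneg x]) (by linarith [Int.natCast_nonneg y])
    have h1 : ((3*k+7)*B + m*C : ℕ) ≤ ((x*B + y*C : ℕ) : ℤ) := by push_cast; linarith
    exact_mod_cast h1
  -- the Frobenius number
  have hAleW : A ≤ (3*k+7)*B + m*C := by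
    have h1 : A ≤ C := by
      rw [hA, hC]
      have : a*(k+3)*(k+1) ≤ a*(k+5)*(k+3) := by
        apply Nat.mul_le_mul
        apply Nat.mul_le_mul_left
        all_goals omega
      omega
    have h2 : 1*C ≤ m*C := Nat.mul_le_mul_right _ (by omega)
    omega
  refine ⟨(3*k+7)*B + m*C - A, ⟨?_, ?_⟩, ?_⟩
  · -- not representable
    intro hmem
    obtain ⟨i, j, l, heq⟩ := closure3_repr hmem
    have hiA : (i+1)*A = i*A + A := by ring
    have hWeq : (3*k+7)*B + m*C = j*B + l*C + (i+1)*A := by omega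
    have hmod : (j*B + l*C) % A = ((3*k+7)*B + m*C) % A := by
      rw [hWeq, Nat.add_mul_mod_self_right]
    have := hmin j l hmod
    omega
  · -- upper bound
    rintro N hN
    simp only [Set.mem_setOf_eq] at hN
    by_contra hlt
    push_neg at hlt
    obtain ⟨p, hpP, hpf⟩ := hcover (N % A) (Nat.mod_lt _ hApos)
    have hwW := hmax p hpP
    have hmod : (p.1*B + p.2*C) ≡ N [MOD A] := hpf
    have hwlt : p.1*B + p.2*C < N + A := by omega
    have hwle : p.1*B + p.2*C ≤ N := hmod.le_of_lt_add hwlt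
    obtain ⟨e, he⟩ := (Nat.modEq_iff_dvd' hwle).mp hmod
    have hcomm : A*e = e*A := Nat.mul_comm A e
    have hNrep : N = e*A + p.1*B + p.2*C := by omega
    exact hN (hNrep ▸ mem_closure3 A B C e p.1 p.2)
  · -- the rational formula
    have hm4Q : (4:ℚ)*(m:ℚ) = (a:ℚ)*((k:ℚ)+1) + 2*(k:ℚ) + 3 := by exact_mod_cast hm4
    rw [Nat.cast_sub hAleW]
    push_cast
    linear_combination ((C:ℚ)/4) * hm4Q
end

section
/- Let a and n be integers with a ≥ 6, a ≡ 2 (mod 4), n ≥ 3, n even, and a(n−2) ≥ 4n. Then the Frobenius number of the triple {S_{a,n}, S_{a,n+1}, S_{a,n+2}} equals (2n−2)·S_{a,n+1} + ((a(n−2)+4n−4)/4)·S_{a,n+2} − S_{a,n}. -/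
set_option linter.unusedSectionVars false
set_option linter.unusedVariables false
set_option maxHeartbeats 1000000

namespace TwoStepStarAux

lemma inj_core (k B y z y' z' : ℤ) (hk : 1 ≤ k) (hB : 2*k+2 ≤ B)
    (hy0 : 0 ≤ y) (hy : y ≤ 8*k+7) (hz0 : 0 ≤ z) (hz : z ≤ B+2*k+1)
    (hbl : y ≤ 4*k+2 ∨ z ≤ B-2*k-2)
    (hy0' : 0 ≤ y') (hy' : y' ≤ 8*k+7) (hz0' : 0 ≤ z') (hz' : z' ≤ B+2*k+1)
    (hbl' : y' ≤ 4*k+2 ∨ z' ≤ B-2*k-2)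
    (hdvd : (8*B*(k+1)+1) ∣ ((4*k+3)*(y-y') + (8*(k+1))*(z-z'))) :
    y = y' ∧ z = z' := by
  obtain ⟨c, hc⟩ := hdvd
  have hs : (0:ℤ) < 8*B*(k+1)+1 := by nlinarith
  have hBk : (2*k+2)*(k+1) ≤ B*(k+1) := by
    apply mul_le_mul_of_nonneg_right hB; linarith
  have hcub : c ≤ 3 := by
    by_contra h
    push_neg at h
    have h4 : (8*B*(k+1)+1)*4 ≤ (8*B*(k+1)+1)*c :=
      mul_le_mul_of_nonneg_left (by linarith) hs.le
    nlinarith [mul_nonneg (show (0:ℤ) ≤ 4*k+3 by linarith) (show (0:ℤ) ≤ 8*k+7-(y-y') by linarith),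
      mul_nonneg (show (0:ℤ) ≤ 8*(k+1) by linarith) (show (0:ℤ) ≤ B+2*k+1-(z-z') by linarith)]
  have hclb : -3 ≤ c := by
    by_contra h
    push_neg at h
    have h4 : (8*B*(k+1)+1)*c ≤ (8*B*(k+1)+1)*(-4) :=
      mul_le_mul_of_nonneg_left (by linarith) hs.le
    nlinarith [mul_nonneg (show (0:ℤ) ≤ 4*k+3 by linarith) (show (0:ℤ) ≤ 8*k+7+(y-y') by linarith),
      mul_nonneg (show (0:ℤ) ≤ 8*(k+1) by linarith) (show (0:ℤ) ≤ B+2*k+1+(z-z') by linarith)]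
  set c2 : ℤ := (2*k+2)*(y-y') - (4*k+5)*(B*c - (z-z')) with hc2def
  have hc2 : y - y' + (4*k+5)*c = 8*(k+1)*c2 := by
    rw [hc2def]; linear_combination (-(4*k+5)) * hc
  have hdz : z - z' = (B+2*k+2)*c - (4*k+3)*c2 := by
    rw [hc2def]; linear_combination (2*k+2) * hc
  have hc2ub : c2 ≤ 2 := by
    by_contra h
    push_neg at h
    have : 8*(k+1)*3 ≤ 8*(k+1)*c2 := mul_le_mul_of_nonneg_left (by linarith) (by linarith)
    nlinarith [mul_nonneg (show (0:ℤ) ≤ 4*k+5 by linarith) (show (0:ℤ) ≤ 3-c by linarith)]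
  have hc2lb : -2 ≤ c2 := by
    by_contra h
    push_neg at h
    have : 8*(k+1)*c2 ≤ 8*(k+1)*(-3) := mul_le_mul_of_nonneg_left (by linarith) (by linarith)
    nlinarith [mul_nonneg (show (0:ℤ) ≤ 4*k+5 by linarith) (show (0:ℤ) ≤ 3+c by linarith)]
  interval_cases c <;> interval_cases c2 <;> omega

section
variable (b k e S S1 S2 : ℕ) (hb : 3 ≤ b) (hk : 1 ≤ k) (he : b*k = 2*k+2+e)
  (hS : S = 8*b*k*(k+1)+1) (hS1 : S1 = 2*b*(2*k+3)*(2*k+1)+1)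
  (hS2 : S2 = 8*b*(k+1)*(k+2)+1)

include he hS hS1 hS2

lemma rel1 : (4*k+3)*S1 + (e+1)*S2 = (b*k+2*b+2*k+2)*S := by
  have heZ : (b:ℤ)*k = 2*k+2+e := by exact_mod_cast he
  have : ((4*k+3)*S1 + (e+1)*S2 : ℤ) = ((b*k+2*b+2*k+2)*S : ℤ) := by
    push_cast [hS, hS1, hS2]
    linear_combination (-1 - 16*(b:ℤ) - 24*b*k - 8*b*k^2) * heZ
  exact_mod_cast this

lemma rel2 : (8*k+8)*S1 = (4*k+3)*S2 + (4*k+5)*S := by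
  subst hS hS1 hS2; ring

lemma rel3 : (b*k+2*k+2)*S2 + S = (4*k+5)*S1 + (2*b+e)*S := by
  have heZ : (b:ℤ)*k = 2*k+2+e := by exact_mod_cast he
  have : ((b*k+2*k+2)*S2 + S : ℤ) = ((4*k+5)*S1 + (2*b+e)*S : ℤ) := by
    push_cast [hS, hS1, hS2]
    linear_combination (1 + 8*(b:ℤ)*k + 8*b*k^2) * heZ
  exact_mod_cast this

lemma cardid : (4*k+3)*(b*k+2*k+2) + (4*k+5)*(e+1) = S := by
  have heZ : (b:ℤ)*k = 2*k+2+e := by exact_mod_cast he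
  have : ((4*k+3)*(b*k+2*k+2) + (4*k+5)*(e+1) : ℤ) = (S : ℤ) := by
    push_cast [hS]
    linear_combination (-(5:ℤ) - 4*k) * heZ
  exact_mod_cast this

include hb hk

lemma reduce : ∀ v y z : ℕ, y*S1 + z*S2 = v →
    ∃ y' z', ((y' ≤ 4*k+2 ∧ z' ≤ b*k+2*k+1) ∨ (4*k+3 ≤ y' ∧ y' ≤ 8*k+7 ∧ z' ≤ e)) ∧
      y'*S1 + z'*S2 ≤ v ∧ (y'*S1 + z'*S2) ≡ v [MOD S] := by
  intro v
  induction v using Nat.strong_induction_on with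
  | _ v ih =>
    intro y z hv
    have hSpos : 1 ≤ S := by omega
    by_cases hA : b*k+2*k+2 ≤ z
    · -- apply R3 : new point (y+4k+5, z-(bk+2k+2)), value drops by (2b+e-1)*S
      set z₀ := z - (b*k+2*k+2) with hz₀
      have hzz : z = z₀ + (b*k+2*k+2) := by omega
      have key : (y+(4*k+5))*S1 + z₀*S2 + (2*b+e)*S = v + S := by
        rw [← hv, hzz]
        have h3 := rel3 b k e S S1 S2 he hS hS1 hS2
        zify at h3 ⊢
        linear_combination -h3
      have hlt : (y+(4*k+5))*S1 + z₀*S2 < v := by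
        have h2 : S + S ≤ (2*b+e)*S := by
          have h22 : 2 ≤ 2*b+e := by omega
          calc S + S = 2*S := by ring
          _ ≤ (2*b+e)*S := Nat.mul_le_mul_right _ h22
        linarith
      obtain ⟨y', z', hmem, hle, hmod⟩ := ih _ hlt (y+(4*k+5)) z₀ rfl
      refine ⟨y', z', hmem, hle.trans hlt.le, ?_⟩
      have hmod2 : ((y+(4*k+5))*S1 + z₀*S2) ≡ v [MOD S] := by
        have : ((y+(4*k+5))*S1 + z₀*S2 + (2*b+e)*S) % S = (v + S) % S := by rw [key]
        simpa [Nat.ModEq, Nat.add_mul_mod_self_right, Nat.add_mod_right] using this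
      exact hmod.trans hmod2
    · by_cases hB : 8*k+8 ≤ y
      · set y₀ := y - (8*k+8) with hy₀
        have hyy : y = y₀ + (8*k+8) := by omega
        have key : y₀*S1 + (z+(4*k+3))*S2 + (4*k+5)*S = v := by
          rw [← hv, hyy]
          have h2 := rel2 b k e S S1 S2 he hS hS1 hS2
          zify at h2 ⊢
          linear_combination -h2
        have hlt : y₀*S1 + (z+(4*k+3))*S2 < v := by
          have hp : 0 < (4*k+5)*S := Nat.mul_pos (by omega) (by omega)
          linarith
        obtain ⟨y', z', hmem, hle, hmod⟩ := ih _ hlt y₀ (z+(4*k+3)) rfl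
        refine ⟨y', z', hmem, hle.trans hlt.le, ?_⟩
        have hmod2 : (y₀*S1 + (z+(4*k+3))*S2) ≡ v [MOD S] := by
          have : (y₀*S1 + (z+(4*k+3))*S2 + (4*k+5)*S) % S = v % S := by rw [key]
          simpa [Nat.ModEq, Nat.add_mul_mod_self_right] using this
        exact hmod.trans hmod2
      · by_cases hC : 4*k+3 ≤ y ∧ e+1 ≤ z
        · set y₀ := y - (4*k+3) with hy₀
          set z₀ := z - (e+1) with hz₀
          have hyy : y = y₀ + (4*k+3) := by omega
          have hzz : z = z₀ + (e+1) := by omega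
          have key : y₀*S1 + z₀*S2 + (b*k+2*b+2*k+2)*S = v := by
            rw [← hv, hyy, hzz]
            have h1 := rel1 b k e S S1 S2 he hS hS1 hS2
            zify at h1 ⊢
            linear_combination -h1
          have hlt : y₀*S1 + z₀*S2 < v := by
            have hp : 0 < (b*k+2*b+2*k+2)*S := Nat.mul_pos (by omega) (by omega)
            linarith
          obtain ⟨y', z', hmem, hle, hmod⟩ := ih _ hlt y₀ z₀ rfl
          refine ⟨y', z', hmem, hle.trans hlt.le, ?_⟩
          have hmod2 : (y₀*S1 + z₀*S2) ≡ v [MOD S] := by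
            have : (y₀*S1 + z₀*S2 + (b*k+2*b+2*k+2)*S) % S = v % S := by rw [key]
            simpa [Nat.ModEq, Nat.add_mul_mod_self_right] using this
          exact hmod.trans hmod2
        · refine ⟨y, z, ?_, le_of_eq hv, by rw [hv]⟩
          push_neg at hC
          by_cases hy4 : y ≤ 4*k+2
          · left; exact ⟨hy4, by omega⟩
          · right; exact ⟨by omega, by omega, by omega⟩

end

lemma mem_closure_triple {A B C m : ℕ} :
    m ∈ AddSubmonoid.closure ({A, B, C} : Set ℕ) ↔ ∃ x y z, m = x*A + y*B + z*C := by
  constructor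
  · intro h
    induction h using AddSubmonoid.closure_induction with
    | mem w hw =>
      simp only [Set.mem_insert_iff, Set.mem_singleton_iff] at hw
      rcases hw with rfl|rfl|rfl
      · exact ⟨1, 0, 0, by ring⟩
      · exact ⟨0, 1, 0, by ring⟩
      · exact ⟨0, 0, 1, by ring⟩
    | zero => exact ⟨0, 0, 0, by ring⟩
    | add u v hu hv ihu ihv =>
      obtain ⟨x, y, z, rfl⟩ := ihu
      obtain ⟨x', y', z', rfl⟩ := ihv
      exact ⟨x+x', y+y', z+z', by ring⟩
  · rintro ⟨x, y, z, rfl⟩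
    have h1 : x*A ∈ AddSubmonoid.closure ({A, B, C} : Set ℕ) := by
      rw [← smul_eq_mul]
      exact nsmul_mem (AddSubmonoid.subset_closure (show A ∈ ({A,B,C}:Set ℕ) by simp)) x
    have h2 : y*B ∈ AddSubmonoid.closure ({A, B, C} : Set ℕ) := by
      rw [← smul_eq_mul]
      exact nsmul_mem (AddSubmonoid.subset_closure (show B ∈ ({A,B,C}:Set ℕ) by simp)) y
    have h3 : z*C ∈ AddSubmonoid.closure ({A, B, C} : Set ℕ) := by
      rw [← smul_eq_mul]
      exact nsmul_mem (AddSubmonoid.subset_closure (show C ∈ ({A,B,C}:Set ℕ) by simp)) z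
    exact add_mem (add_mem h1 h2) h3

lemma inj_nat (b k e S S1 S2 : ℕ) (hb : 3 ≤ b) (hk : 1 ≤ k) (he : b*k = 2*k+2+e)
    (hS : S = 8*b*k*(k+1)+1) (hS1 : S1 = 2*b*(2*k+3)*(2*k+1)+1)
    (hS2 : S2 = 8*b*(k+1)*(k+2)+1) (y z y' z' : ℕ)
    (hm : (y ≤ 4*k+2 ∧ z ≤ b*k+2*k+1) ∨ (4*k+3 ≤ y ∧ y ≤ 8*k+7 ∧ z ≤ e))
    (hm' : (y' ≤ 4*k+2 ∧ z' ≤ b*k+2*k+1) ∨ (4*k+3 ≤ y' ∧ y' ≤ 8*k+7 ∧ z' ≤ e))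
    (hmod : y*S1 + z*S2 ≡ y'*S1 + z'*S2 [MOD S]) : y = y' ∧ z = z' := by
  have heZ : (b:ℤ)*k = 2*k+2+e := by exact_mod_cast he
  obtain ⟨c, hc⟩ := (Nat.ModEq.dvd hmod : (S:ℤ) ∣ (y'*S1+z'*S2 : ℕ) - ((y*S1+z*S2 : ℕ) : ℤ))
  have hD : ((S:ℤ)) ∣ ((4*k+3)*((y':ℤ)-y) + 8*(k+1)*((z':ℤ)-z)) * (2*b) := by
    refine ⟨c - ((y':ℤ)-y) - ((z':ℤ)-z), ?_⟩
    push_cast [hS, hS1, hS2] at hc ⊢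
    linear_combination hc
  have hco : IsCoprime ((S:ℤ)) (2*(b:ℤ)) := by
    refine ⟨1, -(4*(k:ℤ)*(k+1)), ?_⟩
    push_cast [hS]
    ring
  have hDD : ((8*((b:ℤ)*k)*(k+1)+1)) ∣ ((4*k+3)*((y':ℤ)-y) + (8*(k+1))*((z':ℤ)-z)) := by
    have := hco.dvd_of_dvd_mul_right hD
    have hSe : ((S:ℤ)) = 8*((b:ℤ)*k)*(k+1)+1 := by push_cast [hS]; ring
    rwa [hSe] at this
  have hB : 2*(k:ℤ)+2 ≤ (b:ℤ)*k := by
    rw [heZ]; linarith [Int.natCast_nonneg e]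
  have key := inj_core k ((b:ℤ)*k) y' z' y z (by exact_mod_cast hk) hB
    (Int.natCast_nonneg _) ?_ (Int.natCast_nonneg _) ?_ ?_
    (Int.natCast_nonneg _) ?_ (Int.natCast_nonneg _) ?_ ?_ hDD
  · exact ⟨by exact_mod_cast key.1.symm, by exact_mod_cast key.2.symm⟩
  · rcases hm' with ⟨h1,_⟩|⟨_,h1,_⟩ <;> [skip; skip] <;>
      · have := h1; exact_mod_cast (by omega : y' ≤ 8*k+7)
  · rcases hm' with ⟨_,h1⟩|⟨_,_,h1⟩
    · have : (z':ℤ) ≤ (b:ℤ)*k+2*k+1 := by rw [heZ]; exact_mod_cast (by omega : z' ≤ (2*k+2+e)+2*k+1)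
      exact this
    · have : (z':ℤ) ≤ (e:ℤ) := by exact_mod_cast h1
      linarith [heZ]
  · rcases hm' with ⟨h1,_⟩|⟨_,_,h1⟩
    · exact Or.inl (by exact_mod_cast h1)
    · refine Or.inr ?_
      have : (z':ℤ) ≤ (e:ℤ) := by exact_mod_cast h1
      linarith [heZ]
  · rcases hm with ⟨h1,_⟩|⟨_,h1,_⟩ <;>
      · have := h1; exact_mod_cast (by omega : y ≤ 8*k+7)
  · rcases hm with ⟨_,h1⟩|⟨_,_,h1⟩
    · have : (z:ℤ) ≤ (b:ℤ)*k+2*k+1 := by rw [heZ]; exact_mod_cast (by omega : z ≤ (2*k+2+e)+2*k+1)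
      exact this
    · have : (z:ℤ) ≤ (e:ℤ) := by exact_mod_cast h1
      linarith [heZ]
  · rcases hm with ⟨h1,_⟩|⟨_,_,h1⟩
    · exact Or.inl (by exact_mod_cast h1)
    · refine Or.inr ?_
      have : (z:ℤ) ≤ (e:ℤ) := by exact_mod_cast h1
      linarith [heZ]

lemma surj (b k e S S1 S2 : ℕ) (hb : 3 ≤ b) (hk : 1 ≤ k) (he : b*k = 2*k+2+e)
    (hS : S = 8*b*k*(k+1)+1) (hS1 : S1 = 2*b*(2*k+3)*(2*k+1)+1)
    (hS2 : S2 = 8*b*(k+1)*(k+2)+1) (m : ℕ) :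
    ∃ y z, ((y ≤ 4*k+2 ∧ z ≤ b*k+2*k+1) ∨ (4*k+3 ≤ y ∧ y ≤ 8*k+7 ∧ z ≤ e)) ∧
      (y*S1 + z*S2) ≡ m [MOD S] := by
  haveI : NeZero S := ⟨by omega⟩
  set L : Finset (ℕ×ℕ) := (Finset.range (4*k+3) ×ˢ Finset.range (b*k+2*k+2)) ∪
    ((Finset.Icc (4*k+3) (8*k+7)) ×ˢ Finset.range (e+1)) with hL
  have hmemL : ∀ y z : ℕ, (y,z) ∈ L ↔
      ((y ≤ 4*k+2 ∧ z ≤ b*k+2*k+1) ∨ (4*k+3 ≤ y ∧ y ≤ 8*k+7 ∧ z ≤ e)) := by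
    intro y z
    simp only [hL, Finset.mem_union, Finset.mem_product, Finset.mem_range, Finset.mem_Icc]
    omega
  have hdisj : Disjoint (Finset.range (4*k+3) ×ˢ Finset.range (b*k+2*k+2))
      ((Finset.Icc (4*k+3) (8*k+7)) ×ˢ Finset.range (e+1)) := by
    rw [Finset.disjoint_left]
    rintro ⟨u,v⟩ h1 h2
    simp only [Finset.mem_product, Finset.mem_range, Finset.mem_Icc] at h1 h2
    omega
  have hIcc : (Finset.Icc (4*k+3) (8*k+7)).card = 4*k+5 := by
    rw [Nat.card_Icc]; omega
  have hcard : L.card = S := by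
    rw [hL, Finset.card_union_of_disjoint hdisj, Finset.card_product, Finset.card_product,
      Finset.card_range, Finset.card_range, Finset.card_range, hIcc]
    exact cardid b k e S S1 S2 he hS hS1 hS2
  set f : ℕ×ℕ → ZMod S := fun p => ((p.1*S1 + p.2*S2 : ℕ) : ZMod S) with hf
  have hinj : Set.InjOn f L := by
    rintro ⟨u,v⟩ h1 ⟨u',v'⟩ h2 hfe
    have hmod : u*S1+v*S2 ≡ u'*S1+v'*S2 [MOD S] :=
      (ZMod.natCast_eq_natCast_iff _ _ _).1 hfe
    have := inj_nat b k e S S1 S2 hb hk he hS hS1 hS2 u v u' v'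
      ((hmemL u v).1 h1) ((hmemL u' v').1 h2) hmod
    exact Prod.ext this.1 this.2
  have hcard2 : (L.image f).card = Fintype.card (ZMod S) := by
    rw [Finset.card_image_of_injOn hinj, hcard, ZMod.card]
  have huniv : L.image f = Finset.univ := Finset.eq_univ_of_card _ hcard2
  have hmm : ((m : ZMod S)) ∈ L.image f := by rw [huniv]; exact Finset.mem_univ _
  obtain ⟨⟨y,z⟩, hyz, hfm⟩ := Finset.mem_image.1 hmm
  exact ⟨y, z, (hmemL y z).1 hyz, (ZMod.natCast_eq_natCast_iff _ _ _).1 hfm⟩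

end TwoStepStarAux

theorem frobenius_twoStepStar_two_even (a n : ℕ) (ha : 6 ≤ a) (ha4 : a % 4 = 2) (hn : 3 ≤ n) (hn2 : n % 2 = 0) (hbig : 4 * n ≤ a * (n - 2)) :
    ∃ g : ℕ,
      FrobeniusNumber g
        {twoStepStar a n, twoStepStar a (n + 1), twoStepStar a (n + 2)} ∧
      (g : ℚ) = (2 * (n : ℚ) - 2) * twoStepStar a (n + 1) + (((a : ℚ) * ((n : ℚ) - 2) + 4 * (n : ℚ) - 4) / 4) * twoStepStar a (n + 2) - twoStepStar a n := by
  obtain ⟨b, rfl⟩ : ∃ b, a = 2*b := ⟨a/2, by omega⟩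
  obtain ⟨k, rfl⟩ : ∃ k, n = 2*k+2 := ⟨n/2-1, by omega⟩
  have hb : 3 ≤ b := by omega
  have hk : 1 ≤ k := by omega
  set S : ℕ := twoStepStar (2*b) (2*k+2) with hSdef
  set S1 : ℕ := twoStepStar (2*b) (2*k+2+1) with hS1def
  set S2 : ℕ := twoStepStar (2*b) (2*k+2+2) with hS2def
  have hS : S = 8*b*k*(k+1)+1 := by
    rw [hSdef]; unfold twoStepStar
    rw [show 2*k+2-2 = 2*k from by omega]; ring
  have hS1 : S1 = 2*b*(2*k+3)*(2*k+1)+1 := by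
    rw [hS1def]; unfold twoStepStar
    rw [show 2*k+2+1-2 = 2*k+1 from by omega, show 2*k+2+1 = 2*k+3 from by omega]
  have hS2 : S2 = 8*b*(k+1)*(k+2)+1 := by
    rw [hS2def]; unfold twoStepStar
    rw [show 2*k+2+2-2 = 2*k+2 from by omega, show 2*k+2+2 = 2*k+4 from by omega]; ring
  have hbk : 2*k+2 ≤ b*k := by
    have h1 : 2*b*(2*k+2-2) = 4*(b*k) := by
      rw [show 2*k+2-2 = 2*k from by omega]; ring
    rw [h1] at hbig
    linarith
  obtain ⟨e, he⟩ : ∃ e, b*k = 2*k+2+e := Nat.exists_eq_add_of_le hbk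
  -- the Frobenius number
  have hWS : S ≤ (4*k+2)*S1 + (b*k+2*k+1)*S2 := by
    have h1 : S ≤ S2 := by
      rw [hS, hS2]
      have : 8*b*k*(k+1) ≤ 8*b*(k+1)*(k+2) := by
        calc 8*b*k*(k+1) = 8*b*(k+1)*k := by ring
        _ ≤ 8*b*(k+1)*(k+2) := Nat.mul_le_mul_left _ (by omega)
      omega
    have h2 : S2 ≤ (b*k+2*k+1)*S2 := Nat.le_mul_of_pos_left _ (by positivity)
    exact h1.trans (h2.trans (Nat.le_add_left _ _))
  refine ⟨(4*k+2)*S1 + (b*k+2*k+1)*S2 - S, ?_, ?_⟩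
  · set W : ℕ := (4*k+2)*S1 + (b*k+2*k+1)*S2 with hWdef
    set g : ℕ := W - S with hgdef
    have hWg : W = g + S := by omega
    -- max bound over L
    have hmax : ∀ y z : ℕ,
        ((y ≤ 4*k+2 ∧ z ≤ b*k+2*k+1) ∨ (4*k+3 ≤ y ∧ y ≤ 8*k+7 ∧ z ≤ e)) →
        y*S1 + z*S2 ≤ W := by
      rintro y z (⟨h1, h2⟩|⟨h1, h2, h3⟩)
      · exact Nat.add_le_add (Nat.mul_le_mul_right _ h1) (Nat.mul_le_mul_right _ h2)
      · have hy1 : y*S1 ≤ (8*k+7)*S1 := Nat.mul_le_mul_right _ h2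
        have hz1 : z*S2 ≤ e*S2 := Nat.mul_le_mul_right _ h3
        have hkey : (4*k+5)*S1 + (16*b*(k+1)*(k+1)+2*b) = (4*k+3)*S2 + 2 := by
          rw [hS1, hS2]; ring
        have hb2 : 2 ≤ 16*b*(k+1)*(k+1)+2*b := by omega
        have hco : b*k+2*k+1 = e + (4*k+3) := by omega
        rw [hWdef, hco]
        have hexp : (e + (4*k+3))*S2 = e*S2 + (4*k+3)*S2 := by ring
        have hexp2 : (8*k+7)*S1 = (4*k+2)*S1 + (4*k+5)*S1 := by ring
        linarith
    constructor
    · -- g is not representable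
      intro hgc
      rw [TwoStepStarAux.mem_closure_triple] at hgc
      obtain ⟨x, y, z, hg⟩ := hgc
      obtain ⟨y₂, z₂, hmem₂, hle₂, hmod₂⟩ :=
        TwoStepStarAux.reduce b k e S S1 S2 hb hk he hS hS1 hS2 (y*S1+z*S2) y z rfl
      have hg' : g = (y*S1+z*S2) + x*S := by rw [hg]; ring
      have hvg : (y*S1+z*S2) ≡ g [MOD S] := by
        show (y*S1+z*S2) % S = g % S
        rw [hg', Nat.add_mul_mod_self_right]
      have hgW : g ≡ W [MOD S] := by
        show g % S = W % S
        rw [hWg, Nat.add_mod_right]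
      have hchain : (y₂*S1+z₂*S2) ≡ (4*k+2)*S1 + (b*k+2*k+1)*S2 [MOD S] :=
        (hmod₂.trans (hvg.trans hgW))
      obtain ⟨hy₂, hz₂⟩ := TwoStepStarAux.inj_nat b k e S S1 S2 hb hk he hS hS1 hS2
        y₂ z₂ (4*k+2) (b*k+2*k+1) hmem₂ (Or.inl ⟨le_rfl, le_rfl⟩) hchain
      rw [hy₂, hz₂] at hle₂
      have hyzg : y*S1+z*S2 ≤ g := by
        rw [hg']; exact Nat.le_add_right _ _
      have hSpos : 1 ≤ S := by rw [hS]; omega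
      have : W ≤ g := le_trans hle₂ hyzg
      omega
    · -- upper bound
      intro m hm
      by_contra hgm
      push_neg at hgm
      apply hm
      obtain ⟨y, z, hmem, hmod⟩ := TwoStepStarAux.surj b k e S S1 S2 hb hk he hS hS1 hS2 m
      have hwW : y*S1+z*S2 ≤ W := hmax y z hmem
      obtain ⟨c, hc⟩ := (Nat.ModEq.dvd hmod : (S:ℤ) ∣ (m:ℤ) - (y*S1+z*S2 : ℕ))
      have hc0 : 0 ≤ c := by
        by_contra hcn
        push_neg at hcn
        have h1 : c ≤ -1 := by omega
        have h2 : (S:ℤ)*c ≤ (S:ℤ)*(-1) :=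
          mul_le_mul_of_nonneg_left h1 (by positivity)
        have hwWZ : ((y*S1+z*S2 : ℕ) : ℤ) ≤ (W:ℤ) := by exact_mod_cast hwW
        have hWgZ : (W:ℤ) = (g:ℤ) + (S:ℤ) := by exact_mod_cast hWg
        have : (m:ℤ) ≤ (g:ℤ) := by linarith
        have : m ≤ g := by exact_mod_cast this
        omega
      obtain ⟨j, rfl⟩ := Int.eq_ofNat_of_zero_le hc0
      have hmw : m = j*S + (y*S1 + z*S2) := by
        have : (m:ℤ) = (j:ℤ)*S + ((y*S1+z*S2 : ℕ) : ℤ) := by linarith [hc]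
        exact_mod_cast this
      rw [TwoStepStarAux.mem_closure_triple]
      exact ⟨j, y, z, by rw [hmw]; ring⟩
  · -- the rational identity
    rw [Nat.cast_sub hWS]
    rw [hS, hS1, hS2]
    push_cast
    ring
end

section
/- Let a and n be integers with a ≥ 6, a ≡ 2 (mod 4), n ≥ 3, n odd, and a(n−2) ≥ 8n−2. Then the Frobenius number of the triple {S_{a,n}, S_{a,n+1}, S_{a,n+2}} equals (4n−2)·S_{a,n+1} + ((a(n−2)−2)/4)·S_{a,n+2} − S_{a,n}. -/
lemma mem_closure_triple (A B C k : ℕ) :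
    k ∈ AddSubmonoid.closure ({A, B, C} : Set ℕ) ↔ ∃ α β γ : ℕ, k = α*A + β*B + γ*C := by
  constructor
  · intro hk
    induction hk using AddSubmonoid.closure_induction with
    | mem x hx =>
      rcases hx with rfl | rfl | rfl
      · exact ⟨1, 0, 0, by ring⟩
      · exact ⟨0, 1, 0, by ring⟩
      · exact ⟨0, 0, 1, by ring⟩
    | zero => exact ⟨0, 0, 0, by ring⟩
    | add x y hx hy ihx ihy =>
      obtain ⟨a1, b1, c1, rfl⟩ := ihx
      obtain ⟨a2, b2, c2, rfl⟩ := ihy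
      exact ⟨a1+a2, b1+b2, c1+c2, by ring⟩
  · rintro ⟨α, β, γ, rfl⟩
    have hA : A ∈ AddSubmonoid.closure ({A, B, C} : Set ℕ) :=
      AddSubmonoid.subset_closure (by simp)
    have hB : B ∈ AddSubmonoid.closure ({A, B, C} : Set ℕ) :=
      AddSubmonoid.subset_closure (by simp)
    have hC : C ∈ AddSubmonoid.closure ({A, B, C} : Set ℕ) :=
      AddSubmonoid.subset_closure (by simp)
    exact add_mem (add_mem (AddSubmonoid.nsmul_mem _ hA α) (AddSubmonoid.nsmul_mem _ hB β))
      (AddSubmonoid.nsmul_mem _ hC γ)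

lemma keylem (n m u v : ℤ) (hn : 3 ≤ n) (hu1 : -(4*n-1) ≤ u) (hu2 : u ≤ 4*n-1)
    (heq : u*(2*n-1) + 4*n*v = 4*n*m + 2*n + 1) :
    (u = -1 ∧ v = m+1) ∨ (u = 4*n-1 ∧ v = m-2*n+2) := by
  have hdvd : (4*n) ∣ (u + 1) :=
    ⟨-n*u + u - v*(2*n-1) + m*(2*n-1) + n, by linear_combination (2*n-1) * heq⟩
  obtain ⟨k, hk⟩ := hdvd
  have hk0 : k = 0 ∨ k = 1 := by
    rcases lt_trichotomy k 0 with h | h | h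
    · exfalso; nlinarith
    · left; exact h
    · right; nlinarith
  rcases hk0 with rfl | rfl
  · left
    have hu : u = -1 := by linarith
    subst hu
    refine ⟨rfl, ?_⟩
    have h4 : 4*n*(v - (m+1)) = 0 := by linarith
    rcases mul_eq_zero.mp h4 with h | h
    · exfalso; linarith
    · linarith
  · right
    have hu : u = 4*n-1 := by linarith
    subst hu
    refine ⟨rfl, ?_⟩
    have h4 : 4*n*(v - (m-2*n+2)) = 0 := by linarith
    rcases mul_eq_zero.mp h4 with h | h
    · exfalso; linarith
    · linarith

lemma zerolem (n u v : ℤ) (heq : u*(2*n-1) + 4*n*v = 0) :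
    ∃ k : ℤ, u = 4*n*k ∧ v = -(2*n-1)*k := by
  refine ⟨-v*(2*n-1) - u*(n-1), ?_, ?_⟩
  · linear_combination (2*n-1) * heq
  · linear_combination (-(n:ℤ) + 1) * heq

set_option maxHeartbeats 4000000 in
theorem frobenius_twoStepStar_two_odd (a n : ℕ) (ha : 6 ≤ a) (ha4 : a % 4 = 2) (hn : 3 ≤ n) (hn2 : n % 2 = 1) (hbig : 8 * n - 2 ≤ a * (n - 2)) :
    ∃ g : ℕ,
      FrobeniusNumber g
        {twoStepStar a n, twoStepStar a (n + 1), twoStepStar a (n + 2)} ∧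
      (g : ℚ) = (4 * (n : ℚ) - 2) * twoStepStar a (n + 1) + (((a : ℚ) * ((n : ℚ) - 2) - 2) / 4) * twoStepStar a (n + 2) - twoStepStar a n := by
  -- basic decompositions
  obtain ⟨s, hs⟩ : ∃ s, a = 4*s+2 := ⟨a/4, by omega⟩
  obtain ⟨t, ht⟩ : ∃ t, n = 2*t+3 := ⟨(n-3)/2, by omega⟩
  set m : ℕ := 2*s*t + s + t with hmdef
  have hm : a * (n-2) = 4*m + 2 := by
    have h2 : n - 2 = 2*t+1 := by omega
    rw [hs, h2, hmdef]; ring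
  have hm2n : 2*n ≤ m + 1 := by
    have : 8*n - 2 ≤ 4*m+2 := hm ▸ hbig
    omega
  set A := twoStepStar a n with hAdef
  set B := twoStepStar a (n+1) with hBdef
  set C := twoStepStar a (n+2) with hCdef
  have hA : A = 4*n*m + 2*n + 1 := by
    rw [hAdef, twoStepStar, show a*n*(n-2) = n*(a*(n-2)) by ring, hm]; ring
  -- integer forms
  have hzA : (A:ℤ) = (a:ℤ)*n*((n:ℤ)-2) + 1 := by
    rw [hAdef, twoStepStar]; push_cast
    rw [show ((n-2:ℕ):ℤ) = (n:ℤ)-2 from by omega]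
  have hzB : (B:ℤ) = (A:ℤ) + (a:ℤ)*(2*(n:ℤ)-1) := by
    rw [hBdef, twoStepStar, hzA]; push_cast
    rw [show ((n-1:ℕ):ℤ) = (n:ℤ)-1 from by omega]; ring
  have hzC : (C:ℤ) = (A:ℤ) + (a:ℤ)*(4*(n:ℤ)) := by
    rw [hCdef, twoStepStar, hzA]; push_cast
    ring
  have hzA' : (A:ℤ) = 4*(n:ℤ)*m + 2*n + 1 := by exact_mod_cast congrArg (Nat.cast (R := ℤ)) hA
  clear_value A B C
  clear hAdef hBdef hCdef
  have hzn : (3:ℤ) ≤ (n:ℤ) := by exact_mod_cast hn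
  have hza : (6:ℤ) ≤ (a:ℤ) := by exact_mod_cast ha
  have hzm : 2*(n:ℤ) ≤ (m:ℤ) + 1 := by exact_mod_cast hm2n
  have hApos : 1 ≤ A := by rw [hA]; omega
  haveI : NeZero A := ⟨by omega⟩
  have hcop : IsCoprime ((A:ℤ)) ((a:ℤ)) :=
    ⟨1, -((n:ℤ)*((n:ℤ)-2)), by linear_combination hzA⟩
  -- the key residue divisibility
  have resid : ∀ u v : ℤ, (A:ℤ) ∣ u*(B:ℤ) + v*(C:ℤ) → (A:ℤ) ∣ (u*(2*(n:ℤ)-1) + 4*(n:ℤ)*v) := by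
    intro u v h
    have h2 : (A:ℤ) ∣ ((u*(2*(n:ℤ)-1) + 4*(n:ℤ)*v)) * (a:ℤ) := by
      have he : (u*(2*(n:ℤ)-1) + 4*(n:ℤ)*v) * (a:ℤ)
          = (u*(B:ℤ) + v*(C:ℤ)) - (u+v)*(A:ℤ) := by rw [hzB, hzC]; ring
      rw [he]
      exact dvd_sub h (Dvd.intro_left _ rfl)
    exact hcop.dvd_of_dvd_mul_right h2
  -- the region
  clear_value m
  set r : ℕ := m + 2 - 2*n with hrdef
  have hzr : (r:ℤ) = (m:ℤ) + 2 - 2*(n:ℤ) := by omega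
  set R : Finset (ℕ × ℕ) :=
    (Finset.range (4*n-1) ×ˢ Finset.range (m+1)) ∪ (({4*n-1} : Finset ℕ) ×ˢ Finset.range r)
    with hRdef
  have hmemR : ∀ p : ℕ × ℕ, p ∈ R ↔ ((p.1 < 4*n-1 ∧ p.2 < m+1) ∨ (p.1 = 4*n-1 ∧ p.2 < r)) := by
    intro p
    rw [hRdef, Finset.mem_union, Finset.mem_product, Finset.mem_product]
    simp only [Finset.mem_range, Finset.mem_singleton]
  have hcardR : R.card = A := by
    rw [hRdef, Finset.card_union_of_disjoint, Finset.card_product, Finset.card_product]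
    · simp only [Finset.card_range, Finset.card_singleton]
      rw [hrdef, hA]
      zify [show (1:ℕ) ≤ 4*n by omega, show 2*n ≤ m+2 by omega]
      ring
    · rw [Finset.disjoint_left]
      rintro ⟨x, y⟩ hx hy
      simp only [Finset.mem_product, Finset.mem_range, Finset.mem_singleton] at hx hy
      omega
  set f : ℕ × ℕ → ZMod A := fun p => ((p.1 * B + p.2 * C : ℕ) : ZMod A) with hfdef
  have hinj : Set.InjOn f (R : Set (ℕ × ℕ)) := by
    rintro ⟨x1, y1⟩ h1 ⟨x2, y2⟩ h2 hf
    rw [Finset.mem_coe, hmemR] at h1 h2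
    simp only [hfdef] at hf
    rw [ZMod.natCast_eq_natCast_iff] at hf
    rw [Nat.modEq_iff_dvd] at hf
    set u : ℤ := (x2:ℤ) - x1 with hudef
    set v : ℤ := (y2:ℤ) - y1 with hvdef
    have hdvd : (A:ℤ) ∣ u*(B:ℤ) + v*(C:ℤ) := by
      have : ((x2 * B + y2 * C : ℕ) : ℤ) - ((x1 * B + y1 * C : ℕ) : ℤ) = u*(B:ℤ) + v*(C:ℤ) := by
        push_cast; ring
      rw [← this]; exact hf
    obtain ⟨sz, hsz⟩ := resid u v hdvd
    -- bounds
    have hx1 : x1 ≤ 4*n-1 := by omega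
    have hx2 : x2 ≤ 4*n-1 := by omega
    have hy1 : y1 ≤ m := by omega
    have hy2 : y2 ≤ m := by omega
    have hub : u ≤ 4*(n:ℤ)-1 := by simp only [hudef]; omega
    have hlb : -(4*(n:ℤ)-1) ≤ u := by simp only [hudef]; omega
    have hvb : v ≤ (m:ℤ) := by simp only [hvdef]; omega
    have hvlb : -(m:ℤ) ≤ v := by simp only [hvdef]; omega
    have hAzpos : (0:ℤ) < (A:ℤ) := by exact_mod_cast hApos
    have hm4 : 4*(n:ℤ)*(2*(n:ℤ)-1) ≤ 4*(n:ℤ)*m :=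
      mul_le_mul_of_nonneg_left (by linarith) (by positivity)
    have hb1 : u*(2*(n:ℤ)-1) ≤ (4*(n:ℤ)-1)*(2*(n:ℤ)-1) :=
      mul_le_mul_of_nonneg_right hub (by linarith)
    have hb2 : -((4*(n:ℤ)-1)*(2*(n:ℤ)-1)) ≤ u*(2*(n:ℤ)-1) := by
      have := mul_le_mul_of_nonneg_right hlb (show (0:ℤ) ≤ 2*(n:ℤ)-1 by linarith)
      linarith
    have hb3 : 4*(n:ℤ)*v ≤ 4*(n:ℤ)*m :=
      mul_le_mul_of_nonneg_left hvb (by positivity)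
    have hb4 : -(4*(n:ℤ)*m) ≤ 4*(n:ℤ)*v := by
      have := mul_le_mul_of_nonneg_left hvlb (show (0:ℤ) ≤ 4*(n:ℤ) by positivity)
      linarith
    have h2A : 2*(A:ℤ) = 8*(n:ℤ)*m + 4*(n:ℤ) + 2 := by rw [hzA']; ring
    have hexp : (4*(n:ℤ)-1)*(2*(n:ℤ)-1) = 8*(n:ℤ)*(n:ℤ)-6*(n:ℤ)+1 := by ring
    have hm4' : 8*(n:ℤ)*(n:ℤ)-4*(n:ℤ) ≤ 4*(n:ℤ)*m := by
      have : 4*(n:ℤ)*(2*(n:ℤ)-1) = 8*(n:ℤ)*(n:ℤ)-4*(n:ℤ) := by ring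
      linarith [hm4]
    have hup : (A:ℤ)*sz < 2*(A:ℤ) := by
      rw [← hsz, h2A]
      linarith [hb1, hb3, hm4']
    have hdn : -(2*(A:ℤ)) < (A:ℤ)*sz := by
      rw [← hsz, h2A]
      linarith [hb2, hb4, hm4']
    have hsz1 : sz ≤ 1 := by
      by_contra hc
      push_neg at hc
      have : (A:ℤ)*2 ≤ (A:ℤ)*sz := mul_le_mul_of_nonneg_left (by omega) (by linarith)
      linarith
    have hsz2 : -1 ≤ sz := by
      by_contra hc
      push_neg at hc
      have : (A:ℤ)*sz ≤ (A:ℤ)*(-2) := mul_le_mul_of_nonneg_left (by omega) (by linarith)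
      linarith
    have : sz = -1 ∨ sz = 0 ∨ sz = 1 := by omega
    rcases this with rfl | rfl | rfl
    · -- sz = -1
      exfalso
      have heq : (-u)*(2*(n:ℤ)-1) + 4*(n:ℤ)*(-v) = 4*(n:ℤ)*m + 2*(n:ℤ) + 1 := by
        rw [← hzA']; linarith [hsz]
      rcases keylem (n:ℤ) (m:ℤ) (-u) (-v) hzn (by linarith) (by linarith) heq with ⟨h3, h4⟩ | ⟨h3, h4⟩
      · -- u = 1, v = -(m+1)
        have : v = -((m:ℤ)+1) := by linarith
        omega
      · -- -u = 4n-1, -v = m-2n+2 : x2 = 0, x1 = 4n-1, y1 = y2 + r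
        have hx1e : (x1:ℤ) = 4*(n:ℤ)-1 := by omega
        have hx1e' : x1 = 4*n-1 := by omega
        have hbr : y1 < r := by
          rcases h1 with ⟨h5, _⟩ | ⟨_, h5⟩
          · omega
          · exact h5
        have : (y1:ℤ) = (y2:ℤ) + ((m:ℤ) - 2*n + 2) := by omega
        omega
    · -- sz = 0
      obtain ⟨k, hk1, hk2⟩ := zerolem (n:ℤ) u v (by simpa using hsz)
      have hk0 : k = 0 := by
        rcases lt_trichotomy k 0 with h | h | h
        · exfalso
          have : 4*(n:ℤ)*k ≤ 4*(n:ℤ)*(-1) := mul_le_mul_of_nonneg_left (by omega) (by positivity)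
          linarith
        · exact h
        · exfalso
          have : 4*(n:ℤ)*1 ≤ 4*(n:ℤ)*k := mul_le_mul_of_nonneg_left (by omega) (by positivity)
          linarith
      have hu0 : u = 0 := by rw [hk1, hk0]; ring
      have hv0 : v = 0 := by rw [hk2, hk0]; ring
      simp only [hudef] at hu0
      simp only [hvdef] at hv0
      simp only [Prod.mk.injEq]
      exact ⟨by omega, by omega⟩
    · -- sz = 1
      exfalso
      have heq : u*(2*(n:ℤ)-1) + 4*(n:ℤ)*v = 4*(n:ℤ)*m + 2*(n:ℤ) + 1 := by
        rw [← hzA']; linarith [hsz]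
      rcases keylem (n:ℤ) (m:ℤ) u v hzn hlb hub heq with ⟨h3, h4⟩ | ⟨h3, h4⟩
      · omega
      · have hx2e : x2 = 4*n-1 := by omega
        have hbr : y2 < r := by
          rcases h2 with ⟨h5, _⟩ | ⟨_, h5⟩
          · omega
          · exact h5
        omega
  have himage : R.image f = Finset.univ := by
    apply Finset.eq_univ_of_card
    rw [Finset.card_image_of_injOn hinj, hcardR, ZMod.card]
  -- the maximum Apery element
  set M : ℕ := (4*n-2)*B + m*C with hMdef
  have hzM : (M:ℤ) = (4*(n:ℤ)-2)*(B:ℤ) + (m:ℤ)*(C:ℤ) := by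
    rw [hMdef]
    push_cast
    rw [show ((4*n-2:ℕ):ℤ) = 4*(n:ℤ)-2 from by omega]
  have hab : (0:ℤ) ≤ (a:ℤ)*(2*(n:ℤ)-1) := mul_nonneg (by linarith) (by linarith)
  have hBA : A ≤ B := by
    have : (A:ℤ) ≤ (B:ℤ) := by rw [hzB]; linarith
    exact_mod_cast this
  have hBM : B ≤ M := by
    calc B ≤ (4*n-2)*B := Nat.le_mul_of_pos_left B (by omega)
    _ ≤ M := by rw [hMdef]; exact Nat.le_add_right _ _
  have hAM : A ≤ M := le_trans hBA hBM
  set g : ℕ := M - A with hgdef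
  have hzg : (g:ℤ) = (M:ℤ) - (A:ℤ) := by omega
  have hCB : (B:ℤ) ≤ (C:ℤ) := by
    have he : (a:ℤ)*(4*(n:ℤ)) - (a:ℤ)*(2*(n:ℤ)-1) = (a:ℤ)*(2*(n:ℤ)+1) := by ring
    have h0 : (0:ℤ) ≤ (a:ℤ)*(2*(n:ℤ)+1) := mul_nonneg (by linarith) (by linarith)
    rw [hzB, hzC]; linarith
  have hCpos : (0:ℤ) ≤ (C:ℤ) := by positivity
  have hAbig : 8*(n:ℤ)*(n:ℤ) - 2*(n:ℤ) + 1 ≤ (A:ℤ) := by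
    have h1 : 4*(n:ℤ)*(2*(n:ℤ)-1) ≤ 4*(n:ℤ)*m :=
      mul_le_mul_of_nonneg_left (by linarith) (by positivity)
    have h2 : 4*(n:ℤ)*(2*(n:ℤ)-1) = 8*(n:ℤ)*(n:ℤ)-4*(n:ℤ) := by ring
    rw [hzA']; linarith
  refine ⟨g, ⟨?_, ?_⟩, ?_⟩
  · -- g is not representable
    simp only [Set.mem_setOf_eq]
    rw [mem_closure_triple]
    rintro ⟨α, β, γ, hrep⟩
    have hrepz : (M:ℤ) - (A:ℤ) = (α:ℤ)*A + (β:ℤ)*B + (γ:ℤ)*C := by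
      rw [← hzg]; exact_mod_cast congrArg (Nat.cast (R := ℤ)) hrep
    set u : ℤ := (β:ℤ) - (4*(n:ℤ)-2) with hudef
    set v : ℤ := (γ:ℤ) - (m:ℤ) with hvdef
    have h0 : u*(B:ℤ) + v*(C:ℤ) = (A:ℤ)*(-(α:ℤ)-1) := by
      rw [hudef, hvdef]
      linear_combination hzM - hrepz
    obtain ⟨sz, hsz⟩ := resid u v ⟨-(α:ℤ)-1, h0⟩
    have hfac : u*(B:ℤ) + v*(C:ℤ) = (u+v+(a:ℤ)*sz)*(A:ℤ) := by
      rw [hzB, hzC]; linear_combination (a:ℤ)*hsz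
    have hAne : (A:ℤ) ≠ 0 := by positivity
    have hsum : u+v+(a:ℤ)*sz = -(α:ℤ)-1 :=
      mul_right_cancel₀ hAne (hfac.symm.trans (h0.trans (mul_comm _ _)))
    have hsumle : u+v+(a:ℤ)*sz ≤ -1 := by
      have : (0:ℤ) ≤ (α:ℤ) := by positivity
      rw [hsum]; linarith
    have hulb : -(4*(n:ℤ)-2) ≤ u := by simp only [hudef]; omega
    have hvlb : -(m:ℤ) ≤ v := by simp only [hvdef]; omega
    rcases lt_trichotomy sz 0 with hszc | hszc | hszc
    · -- sz ≤ -1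
      have hszm1 : sz = -1 := by
        have w1 : 4*(n:ℤ)*(-(m:ℤ)) ≤ 4*(n:ℤ)*v :=
          mul_le_mul_of_nonneg_left hvlb (by positivity)
        have w3 : (-(4*(n:ℤ)-2))*(2*(n:ℤ)-1) ≤ u*(2*(n:ℤ)-1) :=
          mul_le_mul_of_nonneg_right hulb (by linarith)
        have w4 : (-(4*(n:ℤ)-2))*(2*(n:ℤ)-1) = -(8*(n:ℤ)*(n:ℤ)) + 8*(n:ℤ) - 2 := by ring
        have w5 : 4*(n:ℤ)*(m:ℤ) = (A:ℤ) - 2*(n:ℤ) - 1 := by rw [hzA']; ring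
        -- A*sz ≥ -2A + something positive
        have w6 : -(2*(A:ℤ)) < (A:ℤ)*sz := by
          rw [← hsz]
          have : 4*(n:ℤ)*(-(m:ℤ)) = -(4*(n:ℤ)*(m:ℤ)) := by ring
          linarith
        by_contra hc
        have hsz2 : sz ≤ -2 := by omega
        have : (A:ℤ)*sz ≤ (A:ℤ)*(-2) := mul_le_mul_of_nonneg_left (by omega) (by positivity)
        linarith
      subst hszm1
      have hune : u ≤ -1 := by
        by_contra hc
        push_neg at hc
        have hu0 : 0 ≤ u := by omega
        have hpos : (0:ℤ) ≤ u*(2*(n:ℤ)-1) := mul_nonneg hu0 (by linarith)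
        have w1 : 4*(n:ℤ)*(-(m:ℤ)) ≤ 4*(n:ℤ)*v :=
          mul_le_mul_of_nonneg_left hvlb (by positivity)
        have w5 : 4*(n:ℤ)*(m:ℤ) = (A:ℤ) - 2*(n:ℤ) - 1 := by rw [hzA']; ring
        have w1' : 4*(n:ℤ)*(-(m:ℤ)) = -(4*(n:ℤ)*(m:ℤ)) := by ring
        have hAz : (0:ℤ) < (A:ℤ) := by exact_mod_cast hApos
        have hu2 : u*(2*(n:ℤ)-1) = (A:ℤ)*(-1) - 4*(n:ℤ)*v := by linarith [hsz]
        linarith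
      have heq' : (-u)*(2*(n:ℤ)-1) + 4*(n:ℤ)*(-v) = 4*(n:ℤ)*(m:ℤ) + 2*(n:ℤ) + 1 := by
        have := hsz
        rw [hzA'] at this
        linarith
      rcases keylem (n:ℤ) (m:ℤ) (-u) (-v) hzn (by linarith) (by linarith) heq' with ⟨h3, _⟩ | ⟨h3, _⟩
      · linarith
      · linarith
    · -- sz = 0
      subst hszc
      obtain ⟨k, hk1, hk2⟩ := zerolem (n:ℤ) u v (by simpa using hsz)
      have hk0 : k ≤ -1 := by
        by_contra hc
        push_neg at hc
        have hk0' : 0 ≤ k := by omega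
        have e1 : 0 ≤ k*(2*(n:ℤ)+1) := mul_nonneg hk0' (by linarith)
        have e2 : u + v = k*(2*(n:ℤ)+1) := by rw [hk1, hk2]; ring
        linarith
      have : 4*(n:ℤ)*k ≤ 4*(n:ℤ)*(-1) := mul_le_mul_of_nonneg_left (by omega) (by positivity)
      rw [← hk1] at this
      linarith
    · -- sz ≥ 1
      have hsz1 : 1 ≤ sz := hszc
      have h4s : 4*(n:ℤ)*(u+v+(a:ℤ)*sz) = u*(2*(n:ℤ)+1) + sz*((A:ℤ)+4*(n:ℤ)*a) := by
        linear_combination hsz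
      have e1 : (-(4*(n:ℤ)-2))*(2*(n:ℤ)+1) ≤ u*(2*(n:ℤ)+1) :=
        mul_le_mul_of_nonneg_right hulb (by linarith)
      have e1' : (-(4*(n:ℤ)-2))*(2*(n:ℤ)+1) = -(8*(n:ℤ)*(n:ℤ)) + 2 := by ring
      have e2 : 1*((A:ℤ)+4*(n:ℤ)*a) ≤ sz*((A:ℤ)+4*(n:ℤ)*a) := by
        apply mul_le_mul_of_nonneg_right hsz1
        have : 4*(n:ℤ)*6 ≤ 4*(n:ℤ)*a := mul_le_mul_of_nonneg_left hza (by positivity)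
        linarith
      have e3 : 4*(n:ℤ)*6 ≤ 4*(n:ℤ)*a := mul_le_mul_of_nonneg_left hza (by positivity)
      have e4 : 4*(n:ℤ)*(u+v+(a:ℤ)*sz) ≤ 4*(n:ℤ)*(-1) :=
        mul_le_mul_of_nonneg_left hsumle (by positivity)
      linarith
  · -- g is an upper bound
    rw [mem_upperBounds]
    intro k hk
    simp only [Set.mem_setOf_eq] at hk
    by_contra hkg
    push_neg at hkg
    apply hk
    rw [mem_closure_triple]
    have hmem : ((k : ZMod A)) ∈ R.image f := by rw [himage]; exact Finset.mem_univ _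
    obtain ⟨⟨x, y⟩, hpR, hfp⟩ := Finset.mem_image.mp hmem
    have hfp' : (A:ℤ) ∣ (k:ℤ) - ((x*B + y*C : ℕ):ℤ) := by
      rw [← Nat.modEq_iff_dvd]
      exact (ZMod.natCast_eq_natCast_iff _ _ _).mp hfp
    have hwM : x*B + y*C ≤ M := by
      rw [hmemR] at hpR
      rcases hpR with ⟨h5, h6⟩ | ⟨h5, h6⟩
      · rw [hMdef]
        exact Nat.add_le_add (Nat.mul_le_mul_right _ (by omega)) (Nat.mul_le_mul_right _ (by omega))
      · have hxz : (x:ℤ) = 4*(n:ℤ)-1 := by omega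
        have hy1 : (1:ℤ) ≤ (m:ℤ) - (y:ℤ) := by omega
        have h7 : 1*(C:ℤ) ≤ ((m:ℤ)-(y:ℤ))*(C:ℤ) := mul_le_mul_of_nonneg_right hy1 hCpos
        have h8 : ((x*B + y*C : ℕ):ℤ) ≤ (M:ℤ) := by
          push_cast
          rw [hxz, hzM]
          linarith
        exact_mod_cast h8
    obtain ⟨d, hd⟩ := hfp'
    have hdpos : 0 ≤ d := by
      by_contra hc
      push_neg at hc
      have hdm : d ≤ -1 := by omega
      have : (A:ℤ)*d ≤ (A:ℤ)*(-1) := mul_le_mul_of_nonneg_left (by omega) (by positivity)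
      have hk1 : (g:ℤ) + 1 ≤ (k:ℤ) := by exact_mod_cast hkg
      have hw : ((x*B + y*C : ℕ):ℤ) ≤ (M:ℤ) := by exact_mod_cast hwM
      rw [hzg] at hk1
      linarith
    refine ⟨d.toNat, x, y, ?_⟩
    have : (k:ℤ) = (d.toNat:ℤ)*(A:ℤ) + (x:ℤ)*(B:ℤ) + (y:ℤ)*(C:ℤ) := by
      rw [Int.toNat_of_nonneg hdpos]
      push_cast at hd
      linarith
    exact_mod_cast this
  · -- the rational formula
    have hq2 : (a:ℚ)*((n:ℚ)-2) = 4*(m:ℚ)+2 := by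
      have h := congrArg (Nat.cast (R := ℚ)) hm
      push_cast [Nat.cast_sub (show 2 ≤ n by omega)] at h
      linarith [h]
    have hq1 : ((a:ℚ)*((n:ℚ)-2) - 2)/4 = (m:ℚ) := by rw [hq2]; ring
    rw [hq1]
    have hgq : (g:ℚ) = (M:ℚ) - (A:ℚ) := by
      rw [hgdef]
      push_cast [Nat.cast_sub hAM]
      ring
    have hMq : (M:ℚ) = (4*(n:ℚ)-2)*(B:ℚ) + (m:ℚ)*(C:ℚ) := by
      rw [hMdef]
      push_cast
      rw [show ((4*n-2:ℕ):ℚ) = 4*(n:ℚ)-2 from by push_cast [Nat.cast_sub (show 2 ≤ 4*n by omega)]; ring]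
    rw [hgq, hMq]
end
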